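/- arXiv:2110.11066 — 3 statements merged into one kernel-verified Lean document; each statement's English description precedes it below -/
import Mathlib

section
/- (Type A_n, Proposition on fundamental weights, part (ii).) Let n ≥ 1 and j ∈ {1, …, n}. Then ℓ_{ϖ₁}⁻(ϖ_j) = j; that is, the least k such that some composition w of k simple reflections of type A_n satisfies ⟨w ϖ_j, ϖ₁⟩ < 0 equals j, and it is attained by w = s₁ ∘ s₂ ∘ ⋯ ∘ s_j (with s_j applied first). -/
open scoped RealInnerProductSpace

/-- The `j`-th simple reflection of type `Aₙ` (`1 ≤ j ≤ n`), acting on `ℝ^{n+1}`: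
it transposes the coordinates numbered `j` and `j+1` (in `1`-based numbering). -/
noncomputable def sA (n j : ℕ) :
    EuclideanSpace ℝ (Fin (n + 1)) → EuclideanSpace ℝ (Fin (n + 1)) :=
  fun v => WithLp.toLp 2 fun i =>
    v ⟨(if (i : ℕ) + 1 = j then j else if (i : ℕ) = j then j - 1 else (i : ℕ)) % (n + 1),
      Nat.mod_lt _ (Nat.succ_pos n)⟩

/-- The composition of the simple reflections indexed by the entries of `l`
(the last entry of the list is applied first). -/
noncomputable def compA (n : ℕ) (l : List ℕ) :
    EuclideanSpace ℝ (Fin (n + 1)) → EuclideanSpace ℝ (Fin (n + 1)) :=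
  l.foldr (fun j g => sA n j ∘ g) id

/-- The fundamental weight `ϖⱼ = e₁ + ⋯ + eⱼ − (j/(n+1))·ε` of type `Aₙ` (`1 ≤ j ≤ n`). -/
noncomputable def wtA (n j : ℕ) : EuclideanSpace ℝ (Fin (n + 1)) :=
  WithLp.toLp 2 fun i => (if (i : ℕ) < j then 1 else 0) - (j : ℝ) / ((n : ℝ) + 1)

def tauN (m a : ℕ) : ℕ := if a + 1 = m then m else if a = m then m - 1 else a

def trackN (l : List ℕ) (a : ℕ) : ℕ := l.foldl (fun a m => tauN m a) a

lemma trackN_cons (m : ℕ) (l : List ℕ) (a : ℕ) : trackN (m :: l) a = trackN l (tauN m a) := rfl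

lemma tauN_le (n m a : ℕ) (hm : m ≤ n) (ha : a ≤ n) : tauN m a ≤ n := by
  unfold tauN; split_ifs <;> omega

lemma tauN_le_succ (m a : ℕ) : tauN m a ≤ a + 1 := by
  unfold tauN; split_ifs <;> omega

lemma tauN_tauN (m a : ℕ) : tauN m (tauN m a) = a := by
  unfold tauN; split_ifs <;> omega

lemma trackN_le (l : List ℕ) (a : ℕ) : trackN l a ≤ a + l.length := by
  induction l generalizing a with
  | nil => simp [trackN]
  | cons m l ih =>
    rw [trackN_cons]
    have h1 := ih (tauN m a)
    have h2 := tauN_le_succ m a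
    simp only [List.length_cons]
    omega

lemma trackN_le_n (n : ℕ) (l : List ℕ) (hl : ∀ m ∈ l, m ≤ n) (a : ℕ) (ha : a ≤ n) :
    trackN l a ≤ n := by
  induction l generalizing a with
  | nil => simpa [trackN]
  | cons m l ih =>
    rw [trackN_cons]
    exact ih (fun m hm => hl m (List.mem_cons_of_mem _ hm)) _
      (tauN_le n m a (hl m (List.mem_cons_self)) ha)

lemma compA_apply (n : ℕ) (l : List ℕ) (hl : ∀ m ∈ l, m ≤ n)
    (v : EuclideanSpace ℝ (Fin (n+1))) (a : ℕ) (ha : a ≤ n) :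
    compA n l v ⟨a, by omega⟩ =
      v ⟨trackN l a, by have := trackN_le_n n l hl a ha; omega⟩ := by
  induction l generalizing a with
  | nil => rfl
  | cons m l ih =>
    have hm : m ≤ n := hl m (List.mem_cons_self)
    have hta : tauN m a ≤ n := tauN_le n m a hm ha
    have step : compA n (m :: l) v ⟨a, by omega⟩ =
        compA n l v ⟨tauN m a % (n+1), Nat.mod_lt _ (Nat.succ_pos n)⟩ := rfl
    rw [step]
    have hfin : (⟨tauN m a % (n+1), Nat.mod_lt _ (Nat.succ_pos n)⟩ : Fin (n+1)) =
        ⟨tauN m a, by omega⟩ := Fin.ext (Nat.mod_eq_of_lt (by omega))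
    rw [hfin, ih (fun m hm => hl m (List.mem_cons_of_mem _ hm)) _ hta]
    rfl

lemma tauF_invol (n m : ℕ) (hm : m ≤ n) :
    Function.Involutive (fun i : Fin (n+1) =>
      (⟨tauN m i % (n+1), Nat.mod_lt _ (Nat.succ_pos n)⟩ : Fin (n+1))) := by
  intro i
  have h1 : tauN m i ≤ n := tauN_le n m i hm (by omega)
  apply Fin.ext
  show tauN m (tauN m ↑i % (n+1)) % (n+1) = ↑i
  have h2 : tauN m ↑i % (n+1) = tauN m ↑i := Nat.mod_eq_of_lt (by omega)
  rw [h2, Nat.mod_eq_of_lt (by have := tauN_le n m (tauN m ↑i) hm h1; omega)]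
  exact tauN_tauN m ↑i

lemma sum_sA (n m : ℕ) (hm : m ≤ n) (v : EuclideanSpace ℝ (Fin (n+1))) :
    ∑ i, sA n m v i = ∑ i, v i :=
  Fintype.sum_bijective _ (tauF_invol n m hm).bijective _ _ (fun _ => rfl)

lemma sum_compA (n : ℕ) (l : List ℕ) (hl : ∀ m ∈ l, m ≤ n)
    (v : EuclideanSpace ℝ (Fin (n+1))) :
    ∑ i, compA n l v i = ∑ i, v i := by
  induction l with
  | nil => rfl
  | cons m l ih =>
    have : ∑ i, compA n (m :: l) v i = ∑ i, sA n m (compA n l v) i := rfl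
    rw [this, sum_sA n m (hl m (List.mem_cons_self))]
    exact ih (fun m hm => hl m (List.mem_cons_of_mem _ hm))

lemma sum_wtA (n j : ℕ) (hj : j ≤ n + 1) : ∑ i, wtA n j i = 0 := by
  simp only [wtA]
  rw [Finset.sum_sub_distrib]
  have h1 : ∑ i : Fin (n+1), (if (i : ℕ) < j then (1:ℝ) else 0) = j := by
    rw [Fin.sum_univ_eq_sum_range (fun i => if i < j then (1:ℝ) else 0)]
    have hf : (Finset.range (n+1)).filter (fun i => i < j) = Finset.range j := by
      ext i; simp; omega
    rw [← Finset.sum_filter, hf]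
    simp
  rw [h1, Finset.sum_const]
  simp
  field_simp
  ring

lemma inner_wtA1 (n : ℕ) (v : EuclideanSpace ℝ (Fin (n+1))) (hv : ∑ i, v i = 0) :
    ⟪v, wtA n 1⟫ = v 0 := by
  rw [PiLp.inner_apply]
  simp only [RCLike.inner_apply, conj_trivial, wtA]
  have : ∀ i : Fin (n+1), v i * ((if (i : ℕ) < 1 then (1:ℝ) else 0) - (1:ℕ) / ((n:ℝ)+1)) =
      (if (i : ℕ) < 1 then v i else 0) - v i * ((1:ℕ) / ((n:ℝ)+1)) := by
    intro i; split_ifs <;> ring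
  rw [Finset.sum_congr rfl (fun i _ => (mul_comm _ _).trans (this i)), Finset.sum_sub_distrib]
  rw [← Finset.sum_mul, hv, zero_mul, sub_zero]
  rw [Fin.sum_univ_succ]
  simp

lemma trackN_range' : ∀ (t s : ℕ), trackN (List.range' (s+1) t) s = s + t := by
  intro t
  induction t with
  | zero => intro s; simp [trackN]
  | succ t ih =>
    intro s
    rw [List.range'_succ, trackN_cons]
    have : tauN (s+1) s = s + 1 := by unfold tauN; simp
    rw [this, ih (s+1)]
    omega

theorem statement2 (n j : ℕ) (hn : 1 ≤ n) (hj1 : 1 ≤ j) (hjn : j ≤ n) :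
    IsLeast {k : ℕ | ∃ l : List ℕ, (∀ m ∈ l, 1 ≤ m ∧ m ≤ n) ∧ l.length = k ∧
        ⟪compA n l (wtA n j), wtA n 1⟫ < 0} j ∧
      ⟪compA n ((List.range j).map (· + 1)) (wtA n j), wtA n 1⟫ < 0 := by
  have key : ∀ l : List ℕ, (∀ m ∈ l, m ≤ n) →
      ⟪compA n l (wtA n j), wtA n 1⟫ =
        (if trackN l 0 < j then (1:ℝ) else 0) - (j:ℝ) / ((n:ℝ)+1) := by
    intro l hl
    have hsum : ∑ i, compA n l (wtA n j) i = 0 := by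
      rw [sum_compA n l hl, sum_wtA n j (by omega)]
    rw [inner_wtA1 n _ hsum]
    have h0 : (0 : Fin (n+1)) = ⟨0, by omega⟩ := rfl
    rw [h0, compA_apply n l hl _ 0 (by omega)]
    rfl
  have hlist : (List.range j).map (· + 1) = List.range' 1 j := by
    rw [List.range'_eq_map_range]
    exact List.map_congr_left (fun i _ => Nat.add_comm i 1)
  have hmem : ∀ m ∈ (List.range j).map (· + 1), 1 ≤ m ∧ m ≤ n := by
    intro m hm
    simp only [List.mem_map, List.mem_range] at hm
    obtain ⟨i, hi, rfl⟩ := hm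
    omega
  have hval : ⟪compA n ((List.range j).map (· + 1)) (wtA n j), wtA n 1⟫ < 0 := by
    rw [key _ (fun m hm => (hmem m hm).2), hlist]
    have ht : trackN (List.range' 1 j) 0 = j := by simpa using trackN_range' j 0
    rw [ht, if_neg (lt_irrefl j)]
    have : (0:ℝ) < (j:ℝ) / ((n:ℝ)+1) := by positivity
    linarith
  refine ⟨⟨⟨(List.range j).map (· + 1), hmem, by simp, hval⟩, ?_⟩, hval⟩
  rintro k ⟨l, hl, rfl, hneg⟩
  by_contra hk
  push_neg at hk
  rw [key l (fun m hm => (hl m hm).2)] at hneg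
  have ht : trackN l 0 < j := by
    have := trackN_le l 0
    omega
  rw [if_pos ht] at hneg
  have : (j:ℝ) / ((n:ℝ)+1) < 1 := by
    rw [div_lt_one (by positivity)]
    have : (j:ℝ) ≤ (n:ℝ) := by exact_mod_cast hjn
    linarith
  linarith
end

section
/- (Type A_n, Proposition on fundamental weights, parts (i) and (iii).) Let n ≥ 1 and j ∈ {1, …, ⌊(n+1)/2⌋}. Then the minimum over k ∈ {1, …, n} of ℓ_{ϖ_j}⁻(ϖ_k) equals j and is attained at k = 1: ℓ_{ϖ_j}⁻(ϖ₁) = j. Moreover, the only linear map of ℝ^{n+1} expressible as a composition of at most j simple reflections of type A_n and satisfying ⟨w ϖ₁, ϖ_j⟩ < 0 is w = s_j ∘ s_{j−1} ∘ ⋯ ∘ s₁ (with s₁ applied first). In particular, for j = 1 the minimum is 1, attained only by s₁. -/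
open scoped RealInnerProductSpace

namespace StmtAux

open Finset

/-! ### Transpositions and the permutation underlying `compA` -/

def tau (n m : ℕ) : Equiv.Perm (Fin (n+1)) :=
  Equiv.swap ⟨(m-1) % (n+1), Nat.mod_lt _ (Nat.succ_pos n)⟩ ⟨m % (n+1), Nat.mod_lt _ (Nat.succ_pos n)⟩

lemma tau_val {n m : ℕ} (hm1 : 1 ≤ m) (hmn : m ≤ n) (i : Fin (n+1)) :
    ((tau n m i : Fin (n+1)) : ℕ) = if (i:ℕ) = m - 1 then m else if (i:ℕ) = m then m - 1 else i := by
  set x : Fin (n+1) := ⟨(m-1) % (n+1), Nat.mod_lt _ (Nat.succ_pos n)⟩ with hxdef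
  set y : Fin (n+1) := ⟨m % (n+1), Nat.mod_lt _ (Nat.succ_pos n)⟩ with hydef
  have hx : (x:ℕ) = m - 1 := Nat.mod_eq_of_lt (by omega)
  have hy : (y:ℕ) = m := Nat.mod_eq_of_lt (by omega)
  by_cases h1 : (i:ℕ) = m - 1
  · have : i = x := Fin.ext (by omega)
    rw [tau, this, Equiv.swap_apply_left, if_pos (by omega), hy]
  · by_cases h2 : (i:ℕ) = m
    · have : i = y := Fin.ext (by omega)
      rw [tau, this, Equiv.swap_apply_right, if_neg (by omega), if_pos (by omega), hx]
    · rw [tau, Equiv.swap_apply_of_ne_of_ne (fun h => h1 (by rw [h, hx]))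
        (fun h => h2 (by rw [h, hy])), if_neg h1, if_neg h2]

lemma sA_apply {n : ℕ} (m : ℕ) (hm1 : 1 ≤ m) (hmn : m ≤ n) (v : EuclideanSpace ℝ (Fin (n+1))) :
    sA n m v = fun i => v (tau n m i) := by
  funext i
  simp only [sA, PiLp.toLp_apply]
  refine congrArg (WithLp.ofLp v) ?_
  apply Fin.ext
  rw [tau_val hm1 hmn]
  show _ % (n+1) = _
  have : (if (i : ℕ) + 1 = m then m else if (i : ℕ) = m then m - 1 else (i : ℕ)) % (n+1)
      = (if (i : ℕ) + 1 = m then m else if (i : ℕ) = m then m - 1 else (i : ℕ)) := by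
    apply Nat.mod_eq_of_lt; split_ifs <;> omega
  rw [this]
  split_ifs <;> omega

/-- The permutation underlying `compA n l`. -/
def permOf (n : ℕ) (l : List ℕ) : Equiv.Perm (Fin (n+1)) :=
  l.foldr (fun m g => g * tau n m) 1

@[simp] lemma permOf_nil (n : ℕ) : permOf n [] = 1 := rfl

lemma permOf_cons (n m : ℕ) (l : List ℕ) : permOf n (m :: l) = permOf n l * tau n m := rfl

lemma compA_apply {n : ℕ} (l : List ℕ) (hl : ∀ m ∈ l, 1 ≤ m ∧ m ≤ n)
    (v : EuclideanSpace ℝ (Fin (n+1))) :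
    compA n l v = fun i => v (permOf n l i) := by
  induction l with
  | nil => rfl
  | cons m t ih =>
    have hm := hl m List.mem_cons_self
    have ht : ∀ x ∈ t, 1 ≤ x ∧ x ≤ n := fun x hx => hl x (List.mem_cons_of_mem m hx)
    show (sA n m (compA n t v)).ofLp = _
    rw [sA_apply m hm.1 hm.2, ih ht]
    rfl

/-! ### Counting lemmas -/

lemma card_filter_lt (N k : ℕ) (hk : k ≤ N) :
    ((univ : Finset (Fin N)).filter (fun i : Fin N => (i:ℕ) < k)).card = k := by
  refine Eq.trans (Finset.card_bij (fun (a : Fin N)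
    (_ : a ∈ (univ : Finset (Fin N)).filter (fun i : Fin N => (i:ℕ) < k)) => (a : ℕ))
    ?_ ?_ ?_) (Finset.card_range k)
  · intro a ha; simp only [mem_filter] at ha; simp [ha.2]
  · intro a _ b _ h; exact Fin.ext h
  · intro b hb
    simp only [mem_range] at hb
    exact ⟨⟨b, lt_of_lt_of_le hb hk⟩, by simp [hb], rfl⟩

lemma card_filter_perm_lt {N : ℕ} (σ : Equiv.Perm (Fin N)) (k : ℕ) (hk : k ≤ N) :
    ((univ : Finset (Fin N)).filter (fun i : Fin N => ((σ i : Fin N) : ℕ) < k)).card = k := by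
  refine Eq.trans (Finset.card_bij (fun (a : Fin N)
    (_ : a ∈ (univ : Finset (Fin N)).filter (fun i : Fin N => ((σ i : Fin N) : ℕ) < k)) => σ a)
    ?_ ?_ ?_) (card_filter_lt N k hk)
  · intro a ha; exact mem_filter.2 ⟨mem_univ _, (mem_filter.1 ha).2⟩
  · intro a _ b _ h; exact σ.injective h
  · intro b hb; exact ⟨σ.symm b, by simpa using (mem_filter.1 hb).2, by simp⟩

/-! ### The inner product formula -/

lemma inner_formula {n : ℕ} (σ : Equiv.Perm (Fin (n+1))) (k j : ℕ) (hk : k ≤ n) (hjn : j ≤ n) :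
    ⟪(show EuclideanSpace ℝ (Fin (n+1)) from WithLp.toLp 2 fun i => wtA n k (σ i)), wtA n j⟫ =
      (((univ.filter (fun i : Fin (n+1) => ((σ i : Fin (n+1)):ℕ) < k ∧ (i:ℕ) < j)).card : ℝ))
        - (k : ℝ) * (j : ℝ)/((n:ℝ)+1) := by
  have hn1 : ((n:ℝ)+1) ≠ 0 := by positivity
  rw [PiLp.inner_apply]
  simp only [RCLike.inner_apply, conj_trivial, wtA, PiLp.toLp_apply]
  have expand : ∀ i : Fin (n+1),
      ((if ((σ i : Fin (n+1)):ℕ) < k then (1:ℝ) else 0) - (k:ℝ)/((n:ℝ)+1)) *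
        ((if (i:ℕ) < j then (1:ℝ) else 0) - (j:ℝ)/((n:ℝ)+1)) =
      (if (((σ i : Fin (n+1)):ℕ) < k ∧ (i:ℕ) < j) then (1:ℝ) else 0)
        - ((j:ℝ)/((n:ℝ)+1)) * (if ((σ i : Fin (n+1)):ℕ) < k then (1:ℝ) else 0)
        - ((k:ℝ)/((n:ℝ)+1)) * (if (i:ℕ) < j then (1:ℝ) else 0)
        + ((k:ℝ)/((n:ℝ)+1)) * ((j:ℝ)/((n:ℝ)+1)) := by
    intro i
    by_cases h1 : ((σ i : Fin (n+1)):ℕ) < k <;> by_cases h2 : (i:ℕ) < j <;>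
      simp [h1, h2] <;> ring
  rw [Finset.sum_congr rfl (fun i _ => (mul_comm _ _).trans (expand i))]
  rw [Finset.sum_add_distrib, Finset.sum_sub_distrib, Finset.sum_sub_distrib,
    ← Finset.mul_sum, ← Finset.mul_sum, Finset.sum_boole, Finset.sum_boole, Finset.sum_boole,
    Finset.sum_const, Finset.card_univ]
  rw [card_filter_perm_lt σ k (by omega), card_filter_lt (n+1) j (by omega)]
  simp only [Fintype.card_fin, nsmul_eq_mul]
  field_simp
  push_cast
  ring

/-! ### Inversions -/

/-- The inversion set of a permutation. -/
def invSet {N : ℕ} (σ : Equiv.Perm (Fin N)) : Finset (Fin N × Fin N) :=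
  univ.filter (fun p : Fin N × Fin N => p.1 < p.2 ∧ σ p.2 < σ p.1)

@[simp] lemma invSet_one {N : ℕ} : invSet (1 : Equiv.Perm (Fin N)) = ∅ := by
  ext p; simp only [invSet, Finset.notMem_empty, iff_false]; rw [Finset.mem_filter]; rintro ⟨_, h1, h2⟩; exact lt_asymm h1 h2

lemma invSet_mul_tau_card {n : ℕ} (σ : Equiv.Perm (Fin (n+1))) (m : ℕ)
    (hm1 : 1 ≤ m) (hmn : m ≤ n) :
    (invSet (σ * tau n m)).card ≤ (invSet σ).card + 1 := by
  set x : Fin (n+1) := ⟨m-1, by omega⟩ with hx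
  set y : Fin (n+1) := ⟨m, by omega⟩ with hy
  have hcard : (invSet (σ * tau n m)).card ≤ ((invSet (σ * tau n m)).erase (x, y)).card + 1 := by
    have hsub : invSet (σ * tau n m) ⊆ insert (x,y) ((invSet (σ * tau n m)).erase (x,y)) := by
      intro z hz
      by_cases h : z = (x,y)
      · exact h ▸ mem_insert_self _ _
      · exact mem_insert_of_mem (mem_erase.2 ⟨h, hz⟩)
    calc (invSet (σ * tau n m)).card ≤ _ := Finset.card_le_card hsub
      _ ≤ _ + 1 := Finset.card_insert_le _ _
  refine hcard.trans (Nat.add_le_add_right ?_ 1)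
  apply Finset.card_le_card_of_injOn (fun p => (tau n m p.1, tau n m p.2))
  · intro p hp
    rw [Finset.mem_coe, mem_erase] at hp
    rw [Finset.mem_coe]
    obtain ⟨hne, hmem⟩ := hp
    rw [invSet, mem_filter] at hmem ⊢
    obtain ⟨-, h12, hs⟩ := hmem
    refine ⟨mem_univ _, ?_, hs⟩
    have hne' : ¬((p.1:ℕ) = m - 1 ∧ (p.2:ℕ) = m) := by
      intro ⟨h1, h2⟩
      exact hne (Prod.ext (Fin.ext (by simpa using h1)) (Fin.ext (by simpa using h2)))
    have v1 := tau_val hm1 hmn p.1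
    have v2 := tau_val hm1 hmn p.2
    have h12' : (p.1:ℕ) < (p.2:ℕ) := h12
    show ((tau n m p.1 : Fin (n+1)):ℕ) < ((tau n m p.2 : Fin (n+1)):ℕ)
    rw [v1, v2]
    split_ifs <;> omega
  · intro p hp q hq h
    have h1 : tau n m p.1 = tau n m q.1 := congrArg Prod.fst h
    have h2 : tau n m p.2 = tau n m q.2 := congrArg Prod.snd h
    exact Prod.ext ((tau n m).injective h1) ((tau n m).injective h2)

lemma invSet_permOf_card_le {n : ℕ} (l : List ℕ) (hl : ∀ m ∈ l, 1 ≤ m ∧ m ≤ n) :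
    (invSet (permOf n l)).card ≤ l.length := by
  induction l with
  | nil => simp
  | cons m t ih =>
    have hm := hl m List.mem_cons_self
    have ht : ∀ x ∈ t, 1 ≤ x ∧ x ≤ n := fun x hx => hl x (List.mem_cons_of_mem m hx)
    rw [permOf_cons]
    calc (invSet (permOf n t * tau n m)).card ≤ (invSet (permOf n t)).card + 1 :=
          invSet_mul_tau_card _ m hm.1 hm.2
      _ ≤ t.length + 1 := Nat.add_le_add_right (ih ht) 1
      _ = (m :: t).length := by simp

-- a*b ≤ number of inversions
lemma prod_le_invSet_card {N : ℕ} (σ : Equiv.Perm (Fin N)) (j k : ℕ) :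
    ((univ : Finset (Fin N)).filter (fun i : Fin N => (i:ℕ) < j ∧ k ≤ ((σ i : Fin N):ℕ))).card *
    ((univ : Finset (Fin N)).filter (fun i : Fin N => j ≤ (i:ℕ) ∧ ((σ i : Fin N):ℕ) < k)).card ≤
    (invSet σ).card := by
  rw [← Finset.card_product]
  apply Finset.card_le_card
  intro p hp
  rw [Finset.mem_product, mem_filter, mem_filter] at hp
  obtain ⟨⟨-, h1j, h1k⟩, ⟨-, h2j, h2k⟩⟩ := hp
  rw [invSet, mem_filter]
  refine ⟨mem_univ _, ?_, ?_⟩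
  · show (p.1:ℕ) < (p.2:ℕ); omega
  · show ((σ p.2:Fin N):ℕ) < ((σ p.1:Fin N):ℕ); omega

-- splitting cards
lemma card_split {N : ℕ} (j k : ℕ) (σ : Equiv.Perm (Fin N)) :
    ((univ : Finset (Fin N)).filter (fun i : Fin N => (i:ℕ) < j)).card =
      ((univ : Finset (Fin N)).filter (fun i : Fin N => ((σ i : Fin N):ℕ) < k ∧ (i:ℕ) < j)).card +
      ((univ : Finset (Fin N)).filter (fun i : Fin N => (i:ℕ) < j ∧ k ≤ ((σ i : Fin N):ℕ))).card := by
  rw [← Finset.card_filter_add_card_filter_not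
    (s := (univ : Finset (Fin N)).filter (fun i : Fin N => (i:ℕ) < j))
    (p := fun i : Fin N => ((σ i : Fin N):ℕ) < k)]
  congr 1
  · apply congrArg Finset.card
    rw [Finset.filter_filter]
    ext i; simp only [mem_filter, mem_univ, true_and]; tauto
  · apply congrArg Finset.card
    rw [Finset.filter_filter]
    ext i; simp only [mem_filter, mem_univ, true_and, not_lt]

lemma card_split' {N : ℕ} (j k : ℕ) (σ : Equiv.Perm (Fin N)) :
    ((univ : Finset (Fin N)).filter (fun i : Fin N => ((σ i : Fin N):ℕ) < k)).card =
      ((univ : Finset (Fin N)).filter (fun i : Fin N => ((σ i : Fin N):ℕ) < k ∧ (i:ℕ) < j)).card +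
      ((univ : Finset (Fin N)).filter (fun i : Fin N => j ≤ (i:ℕ) ∧ ((σ i : Fin N):ℕ) < k)).card := by
  rw [← Finset.card_filter_add_card_filter_not
    (s := (univ : Finset (Fin N)).filter (fun i : Fin N => ((σ i : Fin N):ℕ) < k))
    (p := fun i : Fin N => (i:ℕ) < j)]
  congr 1
  · apply congrArg Finset.card
    rw [Finset.filter_filter]
  · apply congrArg Finset.card
    rw [Finset.filter_filter]
    ext i; simp only [mem_filter, mem_univ, true_and, not_lt]; tauto

-- the key arithmetic lemma
lemma arith (n j k c a b : ℕ) (hj : j = c + a) (hk : k = c + b)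
    (h2j : 2*j ≤ n+1) (hc : c*(n+1) < k*j) (ha : 1 ≤ a) (hb : 1 ≤ b) : j ≤ a*b := by
  by_contra hcon
  push_neg at hcon
  -- a*b ≤ c + a - 1, i.e. a*b + 1 ≤ c + a
  have h1 : a*b + 1 ≤ c + a := by omega
  -- c < b
  have h2 : 2*c*(c+a) ≤ c*(n+1) := by
    have := Nat.mul_le_mul_left c h2j
    calc 2*c*(c+a) = c*(2*j) := by rw [hj]; ring
      _ ≤ c*(n+1) := this
  have h3 : 2*c*(c+a) < (c+b)*(c+a) := by
    calc 2*c*(c+a) ≤ c*(n+1) := h2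
      _ < k*j := hc
      _ = (c+b)*(c+a) := by rw [hj, hk]
  have h4 : c < b := by nlinarith
  -- a*b ≥ a + b - 1
  have h5 : a + b ≤ a*b + 1 := by nlinarith
  omega

set_option maxHeartbeats 1000000 in
lemma unique_perm {n j : ℕ} (hj1 : 1 ≤ j) (h2j : 2*j ≤ n+1) (σ : Equiv.Perm (Fin (n+1)))
    (hc0 : ((univ : Finset (Fin (n+1))).filter
      (fun i : Fin (n+1) => ((σ i : Fin (n+1)):ℕ) < 1 ∧ (i:ℕ) < j)).card = 0)
    (hinv : (invSet σ).card ≤ j) :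
    ∀ i : Fin (n+1), ((σ i : Fin (n+1)):ℕ) =
      if (i:ℕ) < j then (i:ℕ)+1 else if (i:ℕ) = j then 0 else (i:ℕ) := by
  have hjn : j ≤ n := by omega
  have hcardA : ((univ : Finset (Fin (n+1))).filter
      (fun i : Fin (n+1) => (i:ℕ) < j ∧ 1 ≤ ((σ i : Fin (n+1)):ℕ))).card = j := by
    have h1 := card_split (N := n+1) j 1 σ
    rw [hc0, card_filter_lt (n+1) j (by omega)] at h1
    omega
  have hcardB : ((univ : Finset (Fin (n+1))).filter
      (fun i : Fin (n+1) => j ≤ (i:ℕ) ∧ ((σ i : Fin (n+1)):ℕ) < 1)).card = 1 := by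
    have h1 := card_split' (N := n+1) j 1 σ
    rw [hc0, card_filter_perm_lt σ 1 (by omega)] at h1
    omega
  have hsub : ((univ : Finset (Fin (n+1))).filter
        (fun i : Fin (n+1) => (i:ℕ) < j ∧ 1 ≤ ((σ i : Fin (n+1)):ℕ))) ×ˢ
      ((univ : Finset (Fin (n+1))).filter
        (fun i : Fin (n+1) => j ≤ (i:ℕ) ∧ ((σ i : Fin (n+1)):ℕ) < 1)) ⊆ invSet σ := by
    intro p hp
    rw [Finset.mem_product, mem_filter, mem_filter] at hp
    obtain ⟨⟨-, h1j, h1k⟩, ⟨-, h2j, h2k⟩⟩ := hp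
    rw [invSet, mem_filter]
    refine ⟨mem_univ _, ?_, ?_⟩
    · show (p.1:ℕ) < (p.2:ℕ); omega
    · show ((σ p.2 : Fin (n+1)):ℕ) < ((σ p.1 : Fin (n+1)):ℕ); omega
  have hEq : ((univ : Finset (Fin (n+1))).filter
        (fun i : Fin (n+1) => (i:ℕ) < j ∧ 1 ≤ ((σ i : Fin (n+1)):ℕ))) ×ˢ
      ((univ : Finset (Fin (n+1))).filter
        (fun i : Fin (n+1) => j ≤ (i:ℕ) ∧ ((σ i : Fin (n+1)):ℕ) < 1)) = invSet σ := by
    apply Finset.eq_of_subset_of_card_le hsub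
    rw [Finset.card_product, hcardA, hcardB, mul_one]
    exact hinv
  obtain ⟨p, hp⟩ := Finset.card_eq_one.1 hcardB
  have hpB : p ∈ ((univ : Finset (Fin (n+1))).filter
      (fun i : Fin (n+1) => j ≤ (i:ℕ) ∧ ((σ i : Fin (n+1)):ℕ) < 1)) :=
    hp ▸ Finset.mem_singleton_self p
  rw [mem_filter] at hpB
  obtain ⟨-, hpj, hp0⟩ := hpB
  have hσp : ((σ p : Fin (n+1)):ℕ) = 0 := by omega
  -- strict monotonicity away from p
  have mono0 : ∀ i1 i2 : Fin (n+1), (i1:ℕ) < (i2:ℕ) → i2 ≠ p →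
      ((σ i1 : Fin (n+1)):ℕ) < ((σ i2 : Fin (n+1)):ℕ) := by
    intro i1 i2 h12 h2p
    have hni : (i1, i2) ∉ invSet σ := by
      rw [← hEq, Finset.mem_product]
      rintro ⟨-, h2B⟩
      rw [hp, Finset.mem_singleton] at h2B
      exact h2p h2B
    rw [invSet, mem_filter] at hni
    push_neg at hni
    have hle : σ i1 ≤ σ i2 := hni (mem_univ _) (by exact h12)
    have hle' : ((σ i1 : Fin (n+1)):ℕ) ≤ ((σ i2 : Fin (n+1)):ℕ) := hle
    have hne : ((σ i2 : Fin (n+1)):ℕ) ≠ ((σ i1 : Fin (n+1)):ℕ) := by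
      intro hh
      have : i2 = i1 := σ.injective (Fin.ext hh)
      have := congrArg Fin.val this
      omega
    omega
  -- p has value j
  have hpval : (p:ℕ) = j := by
    by_contra hnej
    have hjp : j < (p:ℕ) := by omega
    obtain ⟨x, hxv⟩ : ∃ x : Fin (n+1), (x:ℕ) = j := ⟨⟨j, by omega⟩, rfl⟩
    have hq : x ≠ p := by
      intro h; have := congrArg Fin.val h; omega
    have hσj : 1 ≤ ((σ x : Fin (n+1)):ℕ) := by
      rcases Nat.eq_zero_or_pos ((σ x : Fin (n+1)):ℕ) with h | h
      · exact absurd (σ.injective (Fin.ext (by omega : ((σ x : Fin (n+1)):ℕ) = ((σ p : Fin (n+1)):ℕ)))) hq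
      · exact h
    have hqmem : (x, p) ∈ invSet σ := by
      rw [invSet, mem_filter]
      refine ⟨mem_univ _, ?_, ?_⟩
      · show (x:ℕ) < (p:ℕ); omega
      · show ((σ p : Fin (n+1)):ℕ) < ((σ x : Fin (n+1)):ℕ); omega
    rw [← hEq, Finset.mem_product, mem_filter] at hqmem
    have hxlt : (x:ℕ) < j := hqmem.1.2.1
    omega
  have mono : ∀ i1 i2 : Fin (n+1), (i1:ℕ) < (i2:ℕ) → (i2:ℕ) ≠ j →
      ((σ i1 : Fin (n+1)):ℕ) < ((σ i2 : Fin (n+1)):ℕ) := by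
    intro i1 i2 h hne
    exact mono0 i1 i2 h (fun he => hne (by rw [he]; exact hpval))
  have claim1 : ∀ d : ℕ, ∀ i : Fin (n+1), n - (i:ℕ) ≤ d → j < (i:ℕ) →
      ((σ i : Fin (n+1)):ℕ) ≤ (i:ℕ) := by
    intro d
    induction d with
    | zero =>
      intro i hd hji
      have h1 := (σ i).isLt
      have h2 := i.isLt
      omega
    | succ d ih =>
      intro i hd hji
      by_cases hin : (i:ℕ) = n
      · have h1 := (σ i).isLt; omega
      · obtain ⟨i', hi'⟩ : ∃ i' : Fin (n+1), (i':ℕ) = (i:ℕ)+1 :=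
          ⟨⟨(i:ℕ)+1, by omega⟩, rfl⟩
        have h1 := mono i i' (by omega) (by omega)
        have h2 := ih i' (by omega) (by omega)
        omega
  have claim2 : ∀ i : Fin (n+1), (i:ℕ) < j → ((σ i : Fin (n+1)):ℕ) ≤ j := by
    intro i hij
    by_cases hjn' : j = n
    · have h1 := (σ i).isLt; omega
    · obtain ⟨x', hx'⟩ : ∃ x' : Fin (n+1), (x':ℕ) = j+1 := ⟨⟨j+1, by omega⟩, rfl⟩
      have h1 := mono i x' (by omega) (by omega)
      have h2 := claim1 n x' (by omega) (by omega)
      omega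
  have claim3l : ∀ d : ℕ, ∀ i : Fin (n+1), (i:ℕ) ≤ d → (i:ℕ) < j →
      (i:ℕ)+1 ≤ ((σ i : Fin (n+1)):ℕ) := by
    intro d
    induction d with
    | zero =>
      intro i hd hij
      rcases Nat.eq_zero_or_pos ((σ i : Fin (n+1)):ℕ) with h | h
      · exfalso
        have hip : i = p :=
          σ.injective (Fin.ext (by omega : ((σ i : Fin (n+1)):ℕ) = ((σ p : Fin (n+1)):ℕ)))
        have := congrArg Fin.val hip
        omega
      · omega
    | succ d ih =>
      intro i hd hij
      rcases Nat.eq_zero_or_pos (i:ℕ) with h0 | h0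
      · rcases Nat.eq_zero_or_pos ((σ i : Fin (n+1)):ℕ) with h | h
        · exfalso
          have hip : i = p :=
            σ.injective (Fin.ext (by omega : ((σ i : Fin (n+1)):ℕ) = ((σ p : Fin (n+1)):ℕ)))
          have := congrArg Fin.val hip
          omega
        · omega
      · obtain ⟨i', hi'⟩ : ∃ i' : Fin (n+1), (i':ℕ) = (i:ℕ)-1 := ⟨⟨(i:ℕ)-1, by omega⟩, rfl⟩
        have h1 := ih i' (by omega) (by omega)
        have h2 := mono i' i (by omega) (by omega)
        omega
  have claim3u : ∀ d : ℕ, ∀ i : Fin (n+1), j - (i:ℕ) ≤ d + 1 → (i:ℕ) < j →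
      ((σ i : Fin (n+1)):ℕ) ≤ (i:ℕ)+1 := by
    intro d
    induction d with
    | zero =>
      intro i hd hij
      have := claim2 i hij
      omega
    | succ d ih =>
      intro i hd hij
      by_cases htj : (i:ℕ) = j - 1
      · have := claim2 i hij
        omega
      · obtain ⟨i', hi'⟩ : ∃ i' : Fin (n+1), (i':ℕ) = (i:ℕ)+1 := ⟨⟨(i:ℕ)+1, by omega⟩, rfl⟩
        have h1 := ih i' (by omega) (by omega)
        have h2 := mono i i' (by omega) (by omega)
        omega
  have claim4 : ∀ d : ℕ, ∀ i : Fin (n+1), (i:ℕ) = j+1+d → (i:ℕ) ≤ ((σ i : Fin (n+1)):ℕ) := by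
    intro d
    induction d with
    | zero =>
      intro i hival
      by_contra hcon
      push_neg at hcon
      rcases Nat.eq_zero_or_pos ((σ i : Fin (n+1)):ℕ) with h | h
      · have hip : i = p :=
          σ.injective (Fin.ext (by omega : ((σ i : Fin (n+1)):ℕ) = ((σ p : Fin (n+1)):ℕ)))
        have := congrArg Fin.val hip
        omega
      · obtain ⟨i0, hi0⟩ : ∃ i0 : Fin (n+1), (i0:ℕ) = ((σ i : Fin (n+1)):ℕ) - 1 :=
          ⟨⟨((σ i : Fin (n+1)):ℕ) - 1, by omega⟩, rfl⟩
        have hvj : (i0:ℕ) < j := by omega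
        have h3l := claim3l n i0 (by omega) hvj
        have h3u := claim3u j i0 (by omega) hvj
        have hii : i0 = i :=
          σ.injective (Fin.ext (by omega : ((σ i0 : Fin (n+1)):ℕ) = ((σ i : Fin (n+1)):ℕ)))
        have := congrArg Fin.val hii
        omega
    | succ d ih =>
      intro i hival
      obtain ⟨i', hi'⟩ : ∃ i' : Fin (n+1), (i':ℕ) = (i:ℕ)-1 := ⟨⟨(i:ℕ)-1, by omega⟩, rfl⟩
      have h2 := ih i' (by omega)
      have h3 := mono i' i (by omega) (by omega)
      omega
  -- conclusion
  intro i
  rcases lt_trichotomy ((i:ℕ)) j with hij | hij | hij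
  · have h1 := claim3l n i (by omega) hij
    have h2 := claim3u j i (by omega) hij
    rw [if_pos hij]
    omega
  · have : i = p := Fin.ext (by omega)
    rw [this, if_neg (by omega), if_pos (by omega)]
    exact hσp
  · have h1 := claim1 n i (by omega) hij
    have h2 := claim4 ((i:ℕ) - j - 1) i (by omega)
    rw [if_neg (by omega), if_neg (by omega)]
    omega
lemma l0_succ (j : ℕ) :
    (List.range (j+1)).map (fun i => (j+1) - i) = (j+1) :: (List.range j).map (fun i => j - i) := by
  rw [List.range_succ_eq_map, List.map_cons, List.map_map]
  congr 1
  apply List.map_congr_left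
  intro x _
  simp [Nat.succ_sub_succ]

lemma l0_mem {n j : ℕ} (hj1 : 1 ≤ j) (hjn : j ≤ n) :
    ∀ m ∈ (List.range j).map (fun i => j - i), 1 ≤ m ∧ m ≤ n := by
  intro m hm
  rw [List.mem_map] at hm
  obtain ⟨x, hx, rfl⟩ := hm
  rw [List.mem_range] at hx
  omega

lemma permOf_l0_val {n : ℕ} : ∀ {j : ℕ}, j ≤ n → ∀ i : Fin (n+1),
    ((permOf n ((List.range j).map (fun i => j - i)) i : Fin (n+1)) : ℕ) =
      if (i:ℕ) < j then (i:ℕ)+1 else if (i:ℕ) = j then 0 else (i:ℕ) := by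
  intro j
  induction j with
  | zero =>
    intro _ i
    simp only [List.range_zero, List.map_nil, permOf_nil, Equiv.Perm.one_apply]
    split_ifs <;> omega
  | succ j ih =>
    intro hjn i
    rw [l0_succ, permOf_cons, Equiv.Perm.mul_apply]
    have ht := tau_val (show 1 ≤ j+1 by omega) hjn i
    have hv := ih (by omega) (tau n (j+1) i)
    rw [hv]
    simp only [Nat.add_sub_cancel] at ht
    split_ifs at ht ⊢ <;> omega


lemma neg_iff {n : ℕ} (c k j : ℕ) :
    ((c:ℝ) - (k:ℝ)*(j:ℝ)/((n:ℝ)+1) < 0) ↔ (c*(n+1) < k*j) := by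
  have hpos : (0:ℝ) < (n:ℝ)+1 := by positivity
  rw [sub_neg, lt_div_iff₀ hpos]
  norm_cast

lemma key {n j : ℕ} (hjn : j ≤ n) (k : ℕ) (hk : k ≤ n) (l : List ℕ)
    (hl : ∀ m ∈ l, 1 ≤ m ∧ m ≤ n) :
    ⟪compA n l (wtA n k), wtA n j⟫ =
      (((Finset.univ.filter (fun i : Fin (n+1) =>
          ((permOf n l i : Fin (n+1)):ℕ) < k ∧ (i:ℕ) < j)).card : ℝ))
        - (k : ℝ) * (j : ℝ)/((n:ℝ)+1) := by
  rw [show compA n l (wtA n k) = WithLp.toLp 2 (fun i => wtA n k (permOf n l i)) from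
    congrArg (WithLp.toLp 2) (compA_apply l hl (wtA n k))]
  exact inner_formula (permOf n l) k j hk hjn

end StmtAux

open StmtAux Finset in
theorem statement3 (n j : ℕ) (hn : 1 ≤ n) (hj1 : 1 ≤ j) (hj : j ≤ (n + 1) / 2) :
    IsLeast {k : ℕ | ∃ l : List ℕ, (∀ m ∈ l, 1 ≤ m ∧ m ≤ n) ∧ l.length = k ∧
        ⟪compA n l (wtA n 1), wtA n j⟫ < 0} j ∧
    (∀ k, 1 ≤ k → k ≤ n → ∀ l : List ℕ, (∀ m ∈ l, 1 ≤ m ∧ m ≤ n) →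
        ⟪compA n l (wtA n k), wtA n j⟫ < 0 → j ≤ l.length) ∧
    (∀ l : List ℕ, (∀ m ∈ l, 1 ≤ m ∧ m ≤ n) → l.length ≤ j →
        ⟪compA n l (wtA n 1), wtA n j⟫ < 0 →
        compA n l = compA n ((List.range j).map (fun i => j - i))) := by
  have h2j : 2*j ≤ n+1 := by omega
  have hjn : j ≤ n := by omega
  -- Part 2 : the lower bound
  have part2 : ∀ k, 1 ≤ k → k ≤ n → ∀ l : List ℕ, (∀ m ∈ l, 1 ≤ m ∧ m ≤ n) →
      ⟪compA n l (wtA n k), wtA n j⟫ < 0 → j ≤ l.length := by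
    intro k hk1 hkn l hl hneg
    rw [key hjn k hkn l hl, neg_iff] at hneg
    have hsplit1 := card_split (N := n+1) j k (permOf n l)
    rw [card_filter_lt (n+1) j (by omega)] at hsplit1
    have hsplit2 := card_split' (N := n+1) j k (permOf n l)
    rw [card_filter_perm_lt (permOf n l) k (by omega)] at hsplit2
    have hinv := invSet_permOf_card_le l hl
    have hprod := prod_le_invSet_card (permOf n l) j k
    set c := ((Finset.univ.filter (fun i : Fin (n+1) =>
          ((permOf n l i : Fin (n+1)):ℕ) < k ∧ (i:ℕ) < j)).card) with hc
    set a := ((Finset.univ.filter (fun i : Fin (n+1) =>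
          (i:ℕ) < j ∧ k ≤ ((permOf n l i : Fin (n+1)):ℕ))).card) with ha
    set b := ((Finset.univ.filter (fun i : Fin (n+1) =>
          j ≤ (i:ℕ) ∧ ((permOf n l i : Fin (n+1)):ℕ) < k)).card) with hb
    have hcj : c < j := by nlinarith
    have hck : c < k := by nlinarith
    have harith := arith n j k c a b (by omega) (by omega) h2j hneg (by omega) (by omega)
    omega
  refine ⟨⟨?_, ?_⟩, part2, ?_⟩
  · -- membership
    refine ⟨(List.range j).map (fun i => j - i), l0_mem hj1 hjn, by simp, ?_⟩
    rw [key hjn 1 (by omega) _ (l0_mem hj1 hjn), neg_iff]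
    have hc0 : ((Finset.univ.filter (fun i : Fin (n+1) =>
        ((permOf n ((List.range j).map (fun i => j - i)) i : Fin (n+1)):ℕ) < 1 ∧ (i:ℕ) < j)).card) = 0 := by
      rw [Finset.card_eq_zero, Finset.filter_eq_empty_iff]
      intro i _
      rw [permOf_l0_val hjn i]
      intro ⟨hlt, hij⟩
      rw [if_pos hij] at hlt
      omega
    rw [hc0]
    omega
  · -- lower bound
    rintro x ⟨l, hl, hlen, hneg⟩
    have := part2 1 le_rfl hn l hl hneg
    omega
  · -- uniqueness
    intro l hl hlen hneg
    rw [key hjn 1 (by omega) l hl, neg_iff] at hneg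
    have hc0 : ((Finset.univ.filter (fun i : Fin (n+1) =>
        ((permOf n l i : Fin (n+1)):ℕ) < 1 ∧ (i:ℕ) < j)).card) = 0 := by
      by_contra hne
      have h1 : 1 ≤ ((Finset.univ.filter (fun i : Fin (n+1) =>
        ((permOf n l i : Fin (n+1)):ℕ) < 1 ∧ (i:ℕ) < j)).card) := by omega
      nlinarith
    have hinv : (invSet (permOf n l)).card ≤ j :=
      le_trans (invSet_permOf_card_le l hl) hlen
    have huniq := unique_perm hj1 h2j (permOf n l) hc0 hinv
    have hperm : permOf n l = permOf n ((List.range j).map (fun i => j - i)) := by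
      apply Equiv.ext
      intro i
      apply Fin.ext
      rw [huniq i, permOf_l0_val hjn i]
    funext v
    have h1 := compA_apply l hl v
    rw [hperm] at h1
    exact congrArg (WithLp.toLp 2) (h1.trans (compA_apply _ (l0_mem hj1 hjn) v).symm)
end

section
/- (Values of ℓ and ℓ^sd in type A_n.) Let n ≥ 1. (a) The minimum of ℓ_{ϖ_j}⁻(ϖ_k) over all j, k ∈ {1, …, n} equals 1, and it is attained for j = k = 1 by the single simple reflection s₁. (b) The minimum of ℓ_h⁻(λ), taken over all nonzero h ∈ ℝ^{n+1} with weakly decreasing coordinates satisfying h_i = −h_{n+2−i} for all i, and over all λ ∈ ℝ^{n+1} with weakly decreasing coordinates and λ₁ > λ_{n+1}, equals ⌊(n+2)/2⌋. -/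
open scoped RealInnerProductSpace

open Finset


def Tri : ℕ → ℕ
  | 0 => 0
  | r+1 => Tri r + (r+1)
lemma Tri_succ (r : ℕ) : Tri (r+1) = Tri r + (r+1) := rfl
lemma two_mul_Tri (r : ℕ) : 2 * Tri r = r * (r+1) := by
  induction r with
  | zero => rfl
  | succ r ih => rw [Tri_succ, Nat.mul_add, ih]; ring
lemma Tri_mono : Monotone Tri :=
  monotone_nat_of_le_succ (fun r => by rw [Tri_succ]; omega)

lemma two_mul_Tri' (r : ℕ) : (2:ℤ) * (Tri r : ℤ) = (r:ℤ) * ((r:ℤ)+1) := by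
  exact_mod_cast two_mul_Tri r

lemma mulpred (x : ℕ) : (x:ℤ) ≤ (x:ℤ) * (x:ℤ) := by
  rcases Nat.eq_zero_or_pos x with h|h
  · simp [h]
  · have h1 : (1:ℤ) ≤ (x:ℤ) := by exact_mod_cast h
    nlinarith

set_option maxHeartbeats 1000000 in
lemma core_ineq (n s t g1 g2 : ℕ)
    (hs1 : 1 ≤ s) (hs2 : 2*s ≤ n+1) (ht1 : 1 ≤ t) (ht2 : 2*t ≤ n+1)
    (h12 : g1 ≤ g2) (hcon : g1 + g2 + 1 ≤ t) (hg1 : g1 ≤ min s t) :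
    n+1 ≤ 2 * ((Tri (min s t - g1) + (s-t)*(t-g1))
      + ((Tri (min (n+1-s) t - g2) + ((n+1-s)-t)*(t-g2)) - (Tri (min s t - g2) + (s-t)*(t-g2)))
      + (Tri (t-g2-1) - Tri (t-g2-1-(s-1)))) := by
  have hst : s + t ≤ n + 1 := by omega
  obtain ⟨a, ha⟩ : ∃ a, t = g2 + a := ⟨t - g2, by omega⟩
  have ha1 : 1 ≤ a := by omega
  have hga : g1 + 1 ≤ a := by omega
  obtain ⟨r2, hr2⟩ : ∃ r2, n + 1 = s + t + r2 := ⟨n+1-s-t, by omega⟩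
  obtain ⟨a1, ha1'⟩ : ∃ a1, a = a1 + 1 := ⟨a - 1, by omega⟩
  have ea : t - g2 = a := by omega
  have ea1 : t - g2 - 1 = a1 := by omega
  have emin2 : min (n+1-s) t = t := min_eq_right (by omega)
  have er2 : (n+1-s) - t = r2 := by omega
  rw [ea1, ea, emin2, er2]
  have hg1a1 : g1 ≤ a1 := by omega
  have hr2a : (r2:ℤ) ≤ (r2:ℤ) * (a:ℤ) :=
    le_mul_of_one_le_right (Int.natCast_nonneg r2) (by exact_mod_cast ha1)
  rcases le_or_gt t s with hA | hB
  · -- CASE A : t ≤ s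
    have emin : min s t = t := min_eq_right hA
    rw [emin]
    obtain ⟨p, hp⟩ : ∃ p, t = g1 + p := ⟨t - g1, by omega⟩
    have ep : t - g1 = p := by omega
    obtain ⟨q', hq'⟩ : ∃ q', s = t + q' := ⟨s - t, by omega⟩
    obtain ⟨u, hu⟩ : ∃ u, r2 = q' + u := ⟨r2 - q', by omega⟩
    have e3 : a1 - (s-1) = 0 := by omega
    have eq' : s - t = q' := by omega
    rw [ep, eq', e3, ea]
    have emid : Tri a + r2 * a - (Tri a + q' * a) = u * a := by
      rw [hu, add_mul]
      generalize Tri a = TA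
      generalize hQ : q' * a = QA
      generalize hU : u * a = UA
      omega
    rw [emid]
    simp only [Tri, Nat.sub_zero]
    have hpa : a1 + 1 ≤ p := by omega
    zify
    have c1 := two_mul_Tri' p
    have c2 := two_mul_Tri' a1
    have c3 := mulpred p
    have c4 := mulpred a1
    have c5 : (q':ℤ) ≤ (q':ℤ) * (p:ℤ) :=
      le_mul_of_one_le_right (Int.natCast_nonneg q') (by exact_mod_cast (by omega : 1 ≤ p))
    have c6 : (u:ℤ) ≤ (u:ℤ) * (a:ℤ) :=
      le_mul_of_one_le_right (Int.natCast_nonneg u) (by exact_mod_cast ha1)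
    have c7 : (g1:ℤ) ≤ (a1:ℤ) := by exact_mod_cast hg1a1
    have c8 : (0:ℤ) ≤ (u:ℤ) := Int.natCast_nonneg u
    have c9 : (a:ℤ) = (a1:ℤ) + 1 := by exact_mod_cast ha1'
    have c10 : (n:ℤ) + 1 = 2*(g1:ℤ) + 2*(p:ℤ) + 2*(q':ℤ) + (u:ℤ) := by
      push_cast; omega
    linarith
  · -- CASE B : s < t
    have emin : min s t = s := min_eq_left (by omega)
    rw [emin]
    obtain ⟨p1, hp1⟩ : ∃ p1, s = g1 + p1 := ⟨s - g1, by omega⟩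
    have ep1 : s - g1 = p1 := by omega
    have est : s - t = 0 := by omega
    rw [ep1, est, ea]
    simp only [Nat.zero_mul, Nat.add_zero]
    have hβa : s - g2 ≤ a := by omega
    have hTβ : Tri (s - g2) ≤ Tri a := Tri_mono hβa
    obtain ⟨M, hM⟩ : ∃ M, Tri a + r2 * a = Tri (s - g2) + M :=
      ⟨Tri a + r2 * a - Tri (s-g2), by omega⟩
    rw [hM, Nat.add_sub_cancel_left]
    have c9 : (a:ℤ) = (a1:ℤ) + 1 := by exact_mod_cast ha1'
    have c7 : (g1:ℤ) ≤ (a1:ℤ) := by exact_mod_cast hg1a1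
    have cT : (n:ℤ) + 1 = (s:ℤ) + (t:ℤ) + (r2:ℤ) := by push_cast; omega
    have cta : (t:ℤ) = (g2:ℤ) + (a:ℤ) := by push_cast; omega
    have csp : (s:ℤ) = (g1:ℤ) + (p1:ℤ) := by push_cast; omega
    rcases le_or_gt a s with hBa | hBb
    · -- a ≤ s
      have e3 : a1 - (s-1) = 0 := by omega
      rw [e3]
      simp only [Tri, Nat.sub_zero]
      rcases le_or_gt g2 s with hg2s | hg2s
      · obtain ⟨β, hβ⟩ : ∃ β, s = g2 + β := ⟨s - g2, by omega⟩
        have eβ : s - g2 = β := by omega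
        rw [eβ] at hM
        obtain ⟨e, he⟩ : ∃ e, g2 = g1 + e := ⟨g2 - g1, by omega⟩
        have hβa1 : β ≤ a1 := by omega
        zify
        have d1 := two_mul_Tri' p1
        have d2 := two_mul_Tri' a
        have d3 := two_mul_Tri' a1
        have d4 := two_mul_Tri' β
        have dM : (Tri a : ℤ) + (r2:ℤ)*(a:ℤ) = (Tri β : ℤ) + (M:ℤ) := by exact_mod_cast hM
        have dpe : (p1:ℤ) = (β:ℤ) + (e:ℤ) := by push_cast; omega
        have dp1sq : (p1:ℤ)*(p1:ℤ) = (β:ℤ)*(β:ℤ) + 2*(β:ℤ)*(e:ℤ) + (e:ℤ)*(e:ℤ) := by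
          rw [dpe]; ring
        have dasq : (a:ℤ)*(a:ℤ) = (a1:ℤ)*(a1:ℤ) + 2*(a1:ℤ) + 1 := by rw [c9]; ring
        have d5 := mulpred e
        have d6 := mulpred a1
        have d7 : (0:ℤ) ≤ (β:ℤ)*(e:ℤ) := mul_nonneg (Int.natCast_nonneg β) (Int.natCast_nonneg e)
        have d8 : (β:ℤ) ≤ (a1:ℤ) := by exact_mod_cast hβa1
        have d9 : (0:ℤ) ≤ (r2:ℤ) := Int.natCast_nonneg r2
        linarith
      · have eβ : s - g2 = 0 := by omega
        rw [eβ] at hM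
        simp only [Tri, Nat.zero_add] at hM
        have hts : t ≤ s + r2 := by omega
        zify
        have d1 := two_mul_Tri' p1
        have d2 := two_mul_Tri' a
        have d3 := two_mul_Tri' a1
        have dM : (Tri a : ℤ) + (r2:ℤ)*(a:ℤ) = (M:ℤ) := by exact_mod_cast hM
        have dts : (t:ℤ) ≤ (s:ℤ) + (r2:ℤ) := by exact_mod_cast hts
        have dasq : (a:ℤ)*(a:ℤ) = (a1:ℤ)*(a1:ℤ) + 2*(a1:ℤ) + 1 := by rw [c9]; ring
        have d5 := mulpred p1
        have d6 := mulpred a1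
        have d9 : (0:ℤ) ≤ (r2:ℤ) := Int.natCast_nonneg r2
        linarith
    · -- s < a
      obtain ⟨γ, hγ⟩ : ∃ γ, a1 = (s-1) + γ := ⟨a1 - (s-1), by omega⟩
      have eγ : a1 - (s - 1) = γ := by omega
      rw [eγ]
      have hTγ : Tri γ ≤ Tri a1 := Tri_mono (by omega)
      obtain ⟨M3, hM3⟩ : ∃ M3, Tri a1 = Tri γ + M3 := ⟨Tri a1 - Tri γ, by omega⟩
      rw [hM3, Nat.add_sub_cancel_left]
      have hγ1 : 1 ≤ γ := by omega
      have dγ1 : (1:ℤ) ≤ (γ:ℤ) := by exact_mod_cast hγ1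
      have da1γ : (a1:ℤ) = (s:ℤ) - 1 + (γ:ℤ) := by push_cast [hs1]; omega
      have dasγ : (a:ℤ) = (s:ℤ) + (γ:ℤ) := by push_cast; omega
      have ds1 : (1:ℤ) ≤ (s:ℤ) := by exact_mod_cast hs1
      rcases le_or_gt g2 s with hg2s | hg2s
      · obtain ⟨β, hβ⟩ : ∃ β, s = g2 + β := ⟨s - g2, by omega⟩
        have eβ : s - g2 = β := by omega
        rw [eβ] at hM
        obtain ⟨e, he⟩ : ∃ e, g2 = g1 + e := ⟨g2 - g1, by omega⟩
        zify
        have d1 := two_mul_Tri' p1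
        have d2 := two_mul_Tri' a
        have d3 := two_mul_Tri' a1
        have d4 := two_mul_Tri' β
        have d4' := two_mul_Tri' γ
        have dM : (Tri a : ℤ) + (r2:ℤ)*(a:ℤ) = (Tri β : ℤ) + (M:ℤ) := by exact_mod_cast hM
        have dM3 : (Tri a1 : ℤ) = (Tri γ : ℤ) + (M3:ℤ) := by exact_mod_cast hM3
        have dpe : (p1:ℤ) = (β:ℤ) + (e:ℤ) := by push_cast; omega
        have dp1sq : (p1:ℤ)*(p1:ℤ) = (β:ℤ)*(β:ℤ) + 2*(β:ℤ)*(e:ℤ) + (e:ℤ)*(e:ℤ) := by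
          rw [dpe]; ring
        have dasq : (a:ℤ)*(a:ℤ) = ((s:ℤ)+(γ:ℤ))*((s:ℤ)+(γ:ℤ)) := by rw [dasγ]
        have da1sq : (a1:ℤ)*(a1:ℤ) = ((s:ℤ)-1+(γ:ℤ))*((s:ℤ)-1+(γ:ℤ)) := by rw [da1γ]
        have d5 := mulpred e
        have d6 := mulpred γ
        have d6' := mulpred s
        have d7 : (0:ℤ) ≤ (β:ℤ)*(e:ℤ) := mul_nonneg (Int.natCast_nonneg β) (Int.natCast_nonneg e)
        have d7' : (0:ℤ) ≤ (s:ℤ)*(γ:ℤ) := mul_nonneg (Int.natCast_nonneg s) (Int.natCast_nonneg γ)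
        have d8 : (β:ℤ) ≤ (s:ℤ) := by push_cast; omega
        have d9 : (0:ℤ) ≤ (r2:ℤ) := Int.natCast_nonneg r2
        have d10 : (g1:ℤ) ≤ (s:ℤ) - 1 + (γ:ℤ) := by linarith [c7, da1γ]
        linarith
      · have eβ : s - g2 = 0 := by omega
        rw [eβ] at hM
        simp only [Tri, Nat.zero_add] at hM
        have hts : t ≤ s + r2 := by omega
        zify
        have d1 := two_mul_Tri' p1
        have d2 := two_mul_Tri' a
        have d3 := two_mul_Tri' a1
        have d4' := two_mul_Tri' γ
        have dM : (Tri a : ℤ) + (r2:ℤ)*(a:ℤ) = (M:ℤ) := by exact_mod_cast hM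
        have dM3 : (Tri a1 : ℤ) = (Tri γ : ℤ) + (M3:ℤ) := by exact_mod_cast hM3
        have dts : (t:ℤ) ≤ (s:ℤ) + (r2:ℤ) := by exact_mod_cast hts
        have dasq : (a:ℤ)*(a:ℤ) = ((s:ℤ)+(γ:ℤ))*((s:ℤ)+(γ:ℤ)) := by rw [dasγ]
        have da1sq : (a1:ℤ)*(a1:ℤ) = ((s:ℤ)-1+(γ:ℤ))*((s:ℤ)-1+(γ:ℤ)) := by rw [da1γ]
        have d5 := mulpred p1
        have d6 := mulpred γ
        have d6' := mulpred s
        have d7' : (0:ℤ) ≤ (s:ℤ)*(γ:ℤ) := mul_nonneg (Int.natCast_nonneg s) (Int.natCast_nonneg γ)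
        have d9 : (0:ℤ) ≤ (r2:ℤ) := Int.natCast_nonneg r2
        have d10 : (g1:ℤ) ≤ (s:ℤ) - 1 + (γ:ℤ) := by linarith [c7, da1γ]
        linarith

lemma Fsum_eq (t g : ℕ) : ∀ N, ∑ x ∈ range N, (min (x+1) t - g)
    = Tri (min N t - g) + (N - t) * (t - g) := by
  intro N
  induction N with
  | zero => simp [Tri]
  | succ N ih =>
    rw [Finset.sum_range_succ, ih]
    rcases le_or_gt t N with h | h
    · rw [min_eq_right h, min_eq_right (by omega : t ≤ N + 1)]
      have : N + 1 - t = (N - t) + 1 := by omega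
      rw [this, add_mul, one_mul]; ring
    · rw [min_eq_left (by omega : N ≤ t), min_eq_left (by omega : N + 1 ≤ t)]
      have e0 : N - t = 0 := by omega
      have e0' : N + 1 - t = 0 := by omega
      rw [e0, e0']
      rcases le_or_gt g N with hg | hg
      · have e1 : N + 1 - g = (N - g) + 1 := by omega
        rw [e1, Tri_succ]
        generalize Tri (N - g) = T
        omega
      · have e1 : N - g = 0 := by omega
        have e2 : N + 1 - g ≤ 1 := by omega
        rcases Nat.le_one_iff_eq_zero_or_eq_one.mp e2 with e3 | e3 <;>
          rw [e1, e3] <;> simp [Tri]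

lemma Gsum_eq (a : ℕ) : ∀ K, ∑ i ∈ range K, (a - (i+1)) = Tri (a-1) - Tri (a-1-K) := by
  intro K
  induction K with
  | zero => simp
  | succ K ih =>
    rw [Finset.sum_range_succ, ih]
    rcases le_or_gt a (K+1) with h | h
    · have e1 : a - (K+1) = 0 := by omega
      have e2 : a - 1 - K = a - 1 - (K+1) := by omega
      rw [e1, e2, Nat.add_zero]
    · have e1 : a - 1 - K = (a - 1 - (K+1)) + 1 := by omega
      have h2 : Tri (a-1-K) = Tri (a-1-(K+1)) + (a-1-K) := by
        rw [e1, Tri_succ]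
      have h3 : Tri (a-1-K) ≤ Tri (a-1) := Tri_mono (by omega)
      generalize hT1 : Tri (a-1) = T1 at *
      generalize hT2 : Tri (a-1-K) = T2 at *
      generalize hT3 : Tri (a-1-(K+1)) = T3 at *
      omega

lemma claim_core (n s t : ℕ) (G : ℕ → ℕ) (hs1 : 1 ≤ s) (hs2 : 2*s ≤ n+1)
    (ht1 : 1 ≤ t) (ht2 : 2*t ≤ n+1)
    (hmono : ∀ x y, x ≤ y → y < n → G x ≤ G y)
    (hlip : ∀ x, x + 1 < n → G (x+1) ≤ G x + 1)
    (hub : ∀ x, x < n → G x ≤ min (x+1) t)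
    (hcon : G (s-1) + G (n-s) + 1 ≤ t) :
    n + 1 ≤ 2 * ∑ x ∈ range n, (min (x+1) t - G x) := by
  have hn : 1 ≤ n := by omega
  have hst : s + t ≤ n + 1 := by omega
  have hsn : s ≤ n + 1 - s := by omega
  have hns : n + 1 - s ≤ n := by omega
  set g1 := G (s-1) with hg1def
  set g2 := G (n-s) with hg2def
  have hg12 : g1 ≤ g2 := hmono _ _ (by omega) (by omega)
  have hg1ub : g1 ≤ min s t := by
    have := hub (s-1) (by omega)
    have e : s - 1 + 1 = s := by omega
    rw [e] at this; exact this
  -- iterated Lipschitz above n-s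
  have hiter : ∀ z u, u + z < n → G (u+z) ≤ G u + z := by
    intro z
    induction z with
    | zero => intro u _; exact le_refl _
    | succ z ih =>
      intro u hu
      have h1 : G (u + z + 1) ≤ G (u + z) + 1 := hlip _ (by omega)
      have h2 : G (u + z) ≤ G u + z := ih u (by omega)
      show G (u + z + 1) ≤ G u + (z + 1)
      omega
  -- pointwise lower bound by w
  have hpoint : ∀ x ∈ range n,
      (if x < s then min (x+1) t - g1 else if x < n+1-s then min (x+1) t - g2
        else (t - g2) - (x - (n-s))) ≤ min (x+1) t - G x := by
    intro x hx
    rw [mem_range] at hx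
    split_ifs with h1 h2
    · have := hmono x (s-1) (by omega) (by omega)
      omega
    · have := hmono x (n-s) (by omega) (by omega)
      omega
    · have h3 : G x ≤ g2 + (x - (n-s)) := by
        have h := hiter (x - (n-s)) (n-s) (by omega)
        have e : n - s + (x - (n-s)) = x := by omega
        rw [e] at h
        exact h
      have h4 : t ≤ x + 1 := by omega
      have h5 := hub x (by omega)
      omega
  have hsum1 : ∑ x ∈ range n, (if x < s then min (x+1) t - g1 else if x < n+1-s then
      min (x+1) t - g2 else (t - g2) - (x - (n-s)))
      ≤ ∑ x ∈ range n, (min (x+1) t - G x) := Finset.sum_le_sum hpoint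
  -- split the w-sum
  set w : ℕ → ℕ := fun x => (if x < s then min (x+1) t - g1 else if x < n+1-s then
      min (x+1) t - g2 else (t - g2) - (x - (n-s))) with hw
  have hsplit1 : (∑ x ∈ range (n+1-s), w x) + ∑ x ∈ Ico (n+1-s) n, w x = ∑ x ∈ range n, w x :=
    Finset.sum_range_add_sum_Ico w hns
  have hsplit2 : (∑ x ∈ range s, w x) + ∑ x ∈ Ico s (n+1-s), w x = ∑ x ∈ range (n+1-s), w x :=
    Finset.sum_range_add_sum_Ico w hsn
  -- piece 1
  have hp1 : ∑ x ∈ range s, w x = Tri (min s t - g1) + (s-t)*(t-g1) := by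
    rw [← Fsum_eq t g1 s]
    apply Finset.sum_congr rfl
    intro x hx
    rw [mem_range] at hx
    simp only [hw]
    rw [if_pos hx]
  -- piece 2 : relate to Fsum difference
  have hp2 : (∑ x ∈ range s, (min (x+1) t - g2)) + ∑ x ∈ Ico s (n+1-s), w x
      = Tri (min (n+1-s) t - g2) + ((n+1-s)-t)*(t-g2) := by
    rw [← Fsum_eq t g2 (n+1-s)]
    rw [← Finset.sum_range_add_sum_Ico (fun x => min (x+1) t - g2) hsn]
    congr 1
    apply Finset.sum_congr rfl
    intro x hx
    rw [mem_Ico] at hx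
    simp only [hw]
    rw [if_neg (by omega), if_pos (by omega)]
  -- piece 3
  have hp3 : ∑ x ∈ Ico (n+1-s) n, w x = Tri (t-g2-1) - Tri (t-g2-1-(s-1)) := by
    rw [Finset.sum_Ico_eq_sum_range]
    have e1 : n - (n+1-s) = s - 1 := by omega
    rw [e1, ← Gsum_eq (t-g2) (s-1)]
    apply Finset.sum_congr rfl
    intro i hi
    rw [mem_range] at hi
    simp only [hw]
    rw [if_neg (by omega), if_neg (by omega)]
    congr 1
    omega
  -- assemble
  have hFs : ∑ x ∈ range s, (min (x+1) t - g2) = Tri (min s t - g2) + (s-t)*(t-g2) :=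
    Fsum_eq t g2 s
  have hkey := core_ineq n s t g1 g2 hs1 hs2 ht1 ht2 hg12 hcon hg1ub
  have hw2 : ∑ x ∈ Ico s (n+1-s), w x
      = Tri (min (n+1-s) t - g2) + ((n+1-s)-t)*(t-g2)
        - (Tri (min s t - g2) + (s-t)*(t-g2)) := by omega
  have htot : ∑ x ∈ range n, w x
      = (Tri (min s t - g1) + (s-t)*(t-g1))
        + ((Tri (min (n+1-s) t - g2) + ((n+1-s)-t)*(t-g2))
            - (Tri (min s t - g2) + (s-t)*(t-g2)))
        + (Tri (t-g2-1) - Tri (t-g2-1-(s-1))) := by omega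
  rw [← htot] at hkey
  exact hkey.trans (Nat.mul_le_mul_left 2 hsum1)

lemma claim (n s t : ℕ) (G : ℕ → ℕ) (hs1 : 1 ≤ s) (hs2 : 2*s ≤ n+1)
    (ht1 : 1 ≤ t) (htn : t ≤ n)
    (hmono : ∀ x y, x ≤ y → y < n → G x ≤ G y)
    (hlip : ∀ x, x + 1 < n → G (x+1) ≤ G x + 1)
    (hub : ∀ x, x < n → G x ≤ min (x+1) t)
    (hlb : ∀ x, x < n → x + 1 + t ≤ n + 1 + G x)
    (hcon : G (s-1) + G (n-s) + 1 ≤ t) :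
    n + 1 ≤ 2 * ∑ x ∈ range n, (min (x+1) t - G x) := by
  have hn : 1 ≤ n := by omega
  rcases le_or_gt (2*t) (n+1) with hc | hc
  · exact claim_core n s t G hs1 hs2 ht1 hc hmono hlip hub hcon
  · -- reflect
    set t' := n + 1 - t with ht'
    set G' : ℕ → ℕ := fun y => (y + 1 + G (n-1-y)) - t with hG'
    have ht'1 : 1 ≤ t' := by omega
    have ht'2 : 2*t' ≤ n+1 := by omega
    have hG'lb : ∀ y, y < n → t ≤ y + 1 + G (n-1-y) := by
      intro y hy
      have := hlb (n-1-y) (by omega)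
      omega
    have key := claim_core n s t' G' hs1 hs2 ht'1 ht'2 ?_ ?_ ?_ ?_
    · -- transfer sum
      have hrefl : ∀ y, y < n → min (y+1) t' - G' y = min ((n-1-y)+1) t - G (n-1-y) := by
        intro y hy
        have h1 := hub (n-1-y) (by omega)
        have h2 := hG'lb y hy
        simp only [hG', ht'] at *
        omega
      have : ∑ y ∈ range n, (min (y+1) t' - G' y)
          = ∑ y ∈ range n, (min ((n-1-y)+1) t - G (n-1-y)) := by
        apply Finset.sum_congr rfl
        intro y hy
        rw [mem_range] at hy
        exact hrefl y hy
      rw [this] at key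
      rw [Finset.sum_range_reflect (fun x => min (x+1) t - G x) n] at key
      exact key
    · -- mono
      intro x y hxy hyn
      have h1 : n-1-y ≤ n-1-x := by omega
      have hlips : G (n-1-x) ≤ G (n-1-y) + (y - x) := by
        have hit : ∀ z u, u + z < n → G (u+z) ≤ G u + z := by
          intro z
          induction z with
          | zero => intro u _; exact le_refl _
          | succ z ih =>
            intro u hu
            have h1 : G (u + z + 1) ≤ G (u + z) + 1 := hlip _ (by omega)
            have h2 : G (u + z) ≤ G u + z := ih u (by omega)
            show G (u + z + 1) ≤ G u + (z + 1)
            omega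
        have h := hit (y-x) (n-1-y) (by omega)
        have e : n-1-y + (y-x) = n-1-x := by omega
        rw [e] at h
        exact h
      have hx1 := hG'lb x (by omega)
      have hy1 := hG'lb y (by omega)
      simp only [hG']
      omega
    · -- lip
      intro x hx
      have h1 : G (n-1-(x+1)) ≤ G (n-1-x) := hmono _ _ (by omega) (by omega)
      have hx1 := hG'lb x (by omega)
      have hx2 := hG'lb (x+1) (by omega)
      simp only [hG']
      omega
    · -- ub
      intro y hy
      have h1 := hub (n-1-y) (by omega)
      have h2 := hG'lb y hy
      simp only [hG', ht']
      omega
    · -- con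
      have e1 : n - 1 - (s-1) = n - s := by omega
      have e2 : n - 1 - (n-s) = s - 1 := by omega
      have h1 := hG'lb (s-1) (by omega)
      have h2 := hG'lb (n-s) (by omega)
      rw [e1] at h1
      rw [e2] at h2
      simp only [hG', ht', e1, e2]
      omega

def swapF (n j : ℕ) : Equiv.Perm (Fin (n+1)) :=
  Equiv.swap ⟨(j-1) % (n+1), Nat.mod_lt _ (Nat.succ_pos n)⟩
    ⟨j % (n+1), Nat.mod_lt _ (Nat.succ_pos n)⟩

def permE (n : ℕ) : List ℕ → Equiv.Perm (Fin (n+1))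
  | [] => 1
  | j :: l => (swapF n j).trans (permE n l)

lemma swapF_val (n j : ℕ) (h1 : 1 ≤ j) (h2 : j ≤ n) (u : Fin (n+1)) :
    ((swapF n j u : Fin (n+1)) : ℕ)
      = if (u:ℕ) = j-1 then j else if (u:ℕ) = j then j-1 else (u:ℕ) := by
  have hj1 : (j-1) % (n+1) = j - 1 := Nat.mod_eq_of_lt (by omega)
  have hjm : j % (n+1) = j := Nat.mod_eq_of_lt (by omega)
  unfold swapF
  rw [Equiv.swap_apply_def]
  by_cases e1 : (u:ℕ) = j - 1
  · have : u = (⟨(j-1) % (n+1), Nat.mod_lt _ (Nat.succ_pos n)⟩ : Fin (n+1)) :=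
      Fin.ext (by simp [hj1, e1])
    rw [if_pos this, if_pos e1]
    simp [hjm]
  · have h1' : ¬ (u = (⟨(j-1) % (n+1), Nat.mod_lt _ (Nat.succ_pos n)⟩ : Fin (n+1))) := by
      intro h; apply e1; rw [h]; simp [hj1]
    rw [if_neg h1', if_neg e1]
    by_cases e2 : (u:ℕ) = j
    · have : u = (⟨j % (n+1), Nat.mod_lt _ (Nat.succ_pos n)⟩ : Fin (n+1)) :=
        Fin.ext (by simp [hjm, e2])
      rw [if_pos this, if_pos e2]
      simp [hj1]
    · have h2' : ¬ (u = (⟨j % (n+1), Nat.mod_lt _ (Nat.succ_pos n)⟩ : Fin (n+1))) := by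
        intro h; apply e2; rw [h]; simp [hjm]
      rw [if_neg h2', if_neg e2]

lemma sA_apply (n j : ℕ) (h1 : 1 ≤ j) (h2 : j ≤ n) (w : EuclideanSpace ℝ (Fin (n+1)))
    (i : Fin (n+1)) : sA n j w i = w (swapF n j i) := by
  show w _ = w _
  refine congrArg (WithLp.ofLp w) ?_
  apply Fin.ext
  rw [swapF_val n j h1 h2 i]
  simp only []
  by_cases e1 : (i:ℕ) + 1 = j
  · rw [if_pos e1, if_pos (by omega : (i:ℕ) = j - 1)]
    exact Nat.mod_eq_of_lt (by omega)
  · rw [if_neg e1, if_neg (by omega : ¬ (i:ℕ) = j - 1)]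
    by_cases e2 : (i:ℕ) = j
    · rw [if_pos e2]
      exact Nat.mod_eq_of_lt (by omega)
    · rw [if_neg e2]
      exact Nat.mod_eq_of_lt i.isLt

lemma compA_eq (n : ℕ) (l : List ℕ) (hl : ∀ m ∈ l, 1 ≤ m ∧ m ≤ n)
    (v : EuclideanSpace ℝ (Fin (n+1))) (i : Fin (n+1)) :
    compA n l v i = v (permE n l i) := by
  induction l generalizing i with
  | nil => rfl
  | cons j l ih =>
    have hj := hl j (List.mem_cons_self)
    have hl' : ∀ m ∈ l, 1 ≤ m ∧ m ≤ n := fun m hm => hl m (List.mem_cons_of_mem _ hm)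
    show sA n j (compA n l v) i = v (permE n (j::l) i)
    rw [sA_apply n j hj.1 hj.2]
    rw [ih hl' (swapF n j i)]
    rfl

section Gcstuff

variable (n : ℕ)

def qsN (q : Equiv.Perm (Fin (n+1))) : ℕ → ℕ :=
  fun v => ((q.symm ⟨v % (n+1), Nat.mod_lt _ (Nat.succ_pos n)⟩ : Fin (n+1)) : ℕ)

def Gc (q : Equiv.Perm (Fin (n+1))) (t x : ℕ) : ℕ :=
  ((range t).filter (fun v => qsN n q v ≤ x)).card

lemma qsN_lt (q : Equiv.Perm (Fin (n+1))) (v : ℕ) : qsN n q v ≤ n := by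
  unfold qsN
  have := (q.symm ⟨v % (n+1), Nat.mod_lt _ (Nat.succ_pos n)⟩).isLt
  omega

lemma qsN_inj (q : Equiv.Perm (Fin (n+1))) (v w : ℕ) (hv : v < n+1) (hw : w < n+1)
    (h : qsN n q v = qsN n q w) : v = w := by
  unfold qsN at h
  have h2 := q.symm.injective (Fin.ext h : q.symm _ = q.symm _)
  have h3 : v % (n+1) = w % (n+1) := congrArg Fin.val h2
  rw [Nat.mod_eq_of_lt hv, Nat.mod_eq_of_lt hw] at h3
  exact h3

lemma Gc_mono (q : Equiv.Perm (Fin (n+1))) (t x y : ℕ) (hxy : x ≤ y) :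
    Gc n q t x ≤ Gc n q t y := by
  apply Finset.card_le_card
  intro v hv
  simp only [mem_filter, mem_range] at *
  omega

lemma Gc_lip (q : Equiv.Perm (Fin (n+1))) (t x : ℕ) (ht : t ≤ n+1) :
    Gc n q t (x+1) ≤ Gc n q t x + 1 := by
  have hsub : (range t).filter (fun v => qsN n q v ≤ x+1)
      ⊆ ((range t).filter (fun v => qsN n q v ≤ x)) ∪ ((range t).filter (fun v => qsN n q v = x+1)) := by
    intro v hv
    simp only [mem_filter, mem_union, mem_range] at *
    omega
  have hcard1 : ((range t).filter (fun v => qsN n q v = x+1)).card ≤ 1 := by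
    apply Finset.card_le_one.mpr
    intro v hv w hw
    simp only [mem_filter, mem_range] at hv hw
    exact qsN_inj n q v w (by omega) (by omega) (by omega)
  calc Gc n q t (x+1) ≤ _ := Finset.card_le_card hsub
    _ ≤ _ + _ := Finset.card_union_le _ _
    _ ≤ Gc n q t x + 1 := by
      unfold Gc
      omega

lemma Gc_ub (q : Equiv.Perm (Fin (n+1))) (t x : ℕ) (ht : t ≤ n+1) :
    Gc n q t x ≤ min (x+1) t := by
  apply le_min
  · have h1 : Gc n q t x ≤ (range (x+1)).card := by
      apply Finset.card_le_card_of_injOn (fun v => qsN n q v)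
      · intro v hv
        simp only [Finset.mem_coe, mem_filter, mem_range] at hv ⊢
        omega
      · intro v hv w hw h
        simp only [Finset.coe_filter, Set.mem_setOf_eq, mem_range] at hv hw
        exact qsN_inj n q v w (by omega) (by omega) h
    rwa [Finset.card_range] at h1
  · calc Gc n q t x ≤ ((range t)).card := Finset.card_le_card (Finset.filter_subset _ _)
      _ = t := Finset.card_range t

lemma Gc_lb (q : Equiv.Perm (Fin (n+1))) (t x : ℕ) (ht : t ≤ n+1) (hx : x ≤ n) :
    x + 1 + t ≤ n + 1 + Gc n q t x := by
  have hsplit := Finset.card_filter_add_card_filter_not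
    (s := range t) (p := fun v => qsN n q v ≤ x)
  have hneg : ((range t).filter (fun v => ¬ qsN n q v ≤ x)).card ≤ (Finset.Ico (x+1) (n+1)).card := by
    apply Finset.card_le_card_of_injOn (fun v => qsN n q v)
    · intro v hv
      simp only [Finset.mem_coe, mem_filter, mem_range, Finset.mem_Ico] at hv ⊢
      have := qsN_lt n q v
      omega
    · intro v hv w hw h
      simp only [Finset.coe_filter, Set.mem_setOf_eq, mem_range] at hv hw
      exact qsN_inj n q v w (by omega) (by omega) h
  rw [Nat.card_Ico] at hneg
  rw [Finset.card_range] at hsplit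
  unfold Gc
  omega

lemma qsN_one (v : ℕ) (hv : v < n+1) : qsN n 1 v = v := by
  show ((Equiv.refl (Fin (n+1))).symm ⟨v % (n+1), Nat.mod_lt _ (Nat.succ_pos n)⟩ : Fin (n+1)).val = v
  simp [Nat.mod_eq_of_lt hv]

lemma Gc_one (t x : ℕ) (ht : t ≤ n+1) : Gc n 1 t x = min (x+1) t := by
  unfold Gc
  have he : (range t).filter (fun v => qsN n 1 v ≤ x) = range (min (x+1) t) := by
    ext v
    simp only [mem_filter, mem_range, Nat.lt_min]
    constructor
    · rintro ⟨hv, hle⟩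
      rw [qsN_one n v (by omega)] at hle
      omega
    · rintro ⟨h1, h2⟩
      exact ⟨h2, by rw [qsN_one n v (by omega)]; omega⟩
  rw [he, Finset.card_range]

end Gcstuff

namespace Gc2
variable (n : ℕ)

lemma qsN_step (q' : Equiv.Perm (Fin (n+1))) (j : ℕ) (h1 : 1 ≤ j) (h2 : j ≤ n) (v : ℕ) :
    qsN n ((swapF n j).trans q') v
      = if qsN n q' v = j-1 then j else if qsN n q' v = j then j-1 else qsN n q' v := by
  unfold qsN
  have e : ((swapF n j).trans q').symm
      ⟨v % (n+1), Nat.mod_lt _ (Nat.succ_pos n)⟩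
      = swapF n j (q'.symm ⟨v % (n+1), Nat.mod_lt _ (Nat.succ_pos n)⟩) := by
    rw [Equiv.symm_trans_apply]
    congr 1
  rw [e]
  exact swapF_val n j h1 h2 _

lemma Gc_step_ne (q' : Equiv.Perm (Fin (n+1))) (j t x : ℕ) (h1 : 1 ≤ j) (h2 : j ≤ n)
    (hx : x ≠ j - 1) :
    Gc n ((swapF n j).trans q') t x = Gc n q' t x := by
  unfold Gc
  congr 1
  ext v
  simp only [Finset.mem_filter, Finset.mem_range]
  rw [qsN_step n q' j h1 h2 v]
  split_ifs with c1 c2 <;> omega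

lemma Gc_step_le (q' : Equiv.Perm (Fin (n+1))) (j t x : ℕ) (h1 : 1 ≤ j) (h2 : j ≤ n)
    (ht : t ≤ n+1) :
    Gc n ((swapF n j).trans q') t x ≤ Gc n q' t x + 1
      ∧ Gc n q' t x ≤ Gc n ((swapF n j).trans q') t x + 1 := by
  have hone : ∀ c : ℕ, ((Finset.range t).filter (fun v => qsN n q' v = c)).card ≤ 1 := by
    intro c
    apply Finset.card_le_one.mpr
    intro v hv w hw
    simp only [Finset.mem_filter, Finset.mem_range] at hv hw
    exact qsN_inj n q' v w (by omega) (by omega) (by omega)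
  constructor
  · have hsub : (Finset.range t).filter (fun v => qsN n ((swapF n j).trans q') v ≤ x)
        ⊆ ((Finset.range t).filter (fun v => qsN n q' v ≤ x))
          ∪ ((Finset.range t).filter (fun v => qsN n q' v = j)) := by
      intro v hv
      simp only [Finset.mem_filter, Finset.mem_union, Finset.mem_range] at *
      rw [qsN_step n q' j h1 h2 v] at hv
      rcases hv with ⟨hv1, hv2⟩
      split_ifs at hv2 with c1 c2 <;> omega
    calc Gc n ((swapF n j).trans q') t x ≤ _ := Finset.card_le_card hsub
      _ ≤ _ + _ := Finset.card_union_le _ _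
      _ ≤ Gc n q' t x + 1 := by
        have := hone j
        unfold Gc
        omega
  · have hsub : (Finset.range t).filter (fun v => qsN n q' v ≤ x)
        ⊆ ((Finset.range t).filter (fun v => qsN n ((swapF n j).trans q') v ≤ x))
          ∪ ((Finset.range t).filter (fun v => qsN n q' v = j - 1)) := by
      intro v hv
      simp only [Finset.mem_filter, Finset.mem_union, Finset.mem_range] at *
      rw [qsN_step n q' j h1 h2 v]
      rcases hv with ⟨hv1, hv2⟩
      split_ifs with c1 c2 <;> omega
    calc Gc n q' t x ≤ _ := Finset.card_le_card hsub
      _ ≤ _ + _ := Finset.card_union_le _ _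
      _ ≤ Gc n ((swapF n j).trans q') t x + 1 := by
        have := hone (j-1)
        unfold Gc
        omega

def dpot (q : Equiv.Perm (Fin (n+1))) (t : ℕ) : ℕ :=
  ∑ x ∈ Finset.range n, (min (x+1) t - Gc n q t x)

lemma dpot_bound (t : ℕ) (ht : t ≤ n+1) :
    ∀ l : List ℕ, (∀ m ∈ l, 1 ≤ m ∧ m ≤ n) → dpot n (permE n l) t ≤ l.length := by
  intro l
  induction l with
  | nil =>
    intro _
    unfold dpot
    have : ∀ x ∈ Finset.range n, min (x+1) t - Gc n (permE n []) t x = 0 := by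
      intro x hx
      have : Gc n (permE n []) t x = min (x+1) t := Gc_one n t x ht
      omega
    rw [Finset.sum_congr rfl this]
    simp
  | cons j l ih =>
    intro hl
    have hj := hl j (List.mem_cons_self)
    have hl' : ∀ m ∈ l, 1 ≤ m ∧ m ≤ n := fun m hm => hl m (List.mem_cons_of_mem _ hm)
    show dpot n ((swapF n j).trans (permE n l)) t ≤ l.length + 1
    set q' := permE n l with hq'
    have hpt : ∀ x ∈ Finset.range n, min (x+1) t - Gc n ((swapF n j).trans q') t x
        ≤ (min (x+1) t - Gc n q' t x) + (if x = j-1 then 1 else 0) := by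
      intro x hx
      by_cases hxj : x = j - 1
      · rw [if_pos hxj]
        have h := (Gc_step_le n q' j t x hj.1 hj.2 ht).2
        omega
      · rw [if_neg hxj, Gc_step_ne n q' j t x hj.1 hj.2 hxj]
        omega
    have hb : dpot n ((swapF n j).trans q') t
        ≤ ∑ x ∈ Finset.range n, ((min (x+1) t - Gc n q' t x) + (if x = j-1 then 1 else 0)) :=
      Finset.sum_le_sum hpt
    rw [Finset.sum_add_distrib] at hb
    have hione : (∑ x ∈ Finset.range n, (if x = j-1 then 1 else 0)) = 1 := by
      rw [Finset.sum_ite_eq' (Finset.range n) (j-1) (fun _ => 1)]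
      rw [if_pos (Finset.mem_range.mpr (by omega))]
    rw [hione] at hb
    have := ih hl'
    unfold dpot at *
    omega

lemma key_count (l : List ℕ) (hl : ∀ m ∈ l, 1 ≤ m ∧ m ≤ n) (hk : 2 * l.length ≤ n)
    (s t : ℕ) (hs1 : 1 ≤ s) (hs2 : 2*s ≤ n+1) (ht1 : 1 ≤ t) (htn : t ≤ n) :
    t ≤ Gc n (permE n l) t (s-1) + Gc n (permE n l) t (n-s) := by
  by_contra hcon
  push_neg at hcon
  have hclaim := claim n s t (Gc n (permE n l) t) hs1 hs2 ht1 htn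
    (fun x y hxy _ => Gc_mono n (permE n l) t x y hxy)
    (fun x _ => Gc_lip n (permE n l) t x (by omega))
    (fun x _ => Gc_ub n (permE n l) t x (by omega))
    (fun x hx => by
      have := Gc_lb n (permE n l) t x (by omega) (by omega)
      omega)
    (by omega)
  have hd := dpot_bound n t (by omega) l hl
  unfold dpot at hd
  omega

lemma Gc_full (q : Equiv.Perm (Fin (n+1))) (x : ℕ) (hx : x ≤ n) :
    Gc n q (n+1) x = x + 1 := by
  have h1 := Gc_ub n q (n+1) x (le_refl _)
  have h2 := Gc_lb n q (n+1) x (le_refl _) hx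
  omega

end Gc2


lemma qsN_def (n : ℕ) (q : Equiv.Perm (Fin (n+1))) (v : ℕ) :
    qsN n q v
      = ((q.symm ⟨v % (n+1), Nat.mod_lt _ (Nat.succ_pos n)⟩ : Fin (n+1)) : ℕ) := rfl

section RealSide

variable (n : ℕ) (q : Equiv.Perm (Fin (n+1)))

lemma E_nonneg (lam : EuclideanSpace ℝ (Fin (n+1)))
    (hlam : ∀ i j : Fin (n+1), i ≤ j → lam j ≤ lam i)
    (hD : ∀ s t : ℕ, 1 ≤ s → 2*s ≤ n+1 → 1 ≤ t → t ≤ n →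
      t ≤ Gc n q t (s-1) + Gc n q t (n-s))
    (hn : 1 ≤ n) (s : ℕ) (hs1 : 1 ≤ s) (hs2 : 2*s ≤ n+1) :
    0 ≤ ∑ j ∈ Finset.range s,
      ((fun m => lam (q ⟨m % (n+1), Nat.mod_lt _ (Nat.succ_pos n)⟩)) j
        - (fun m => lam (q ⟨m % (n+1), Nat.mod_lt _ (Nat.succ_pos n)⟩)) (n - j)) := by
  set Lq : ℕ → ℝ := fun m => lam (q ⟨m % (n+1), Nat.mod_lt _ (Nat.succ_pos n)⟩) with hLq
  set Lam : ℕ → ℝ := fun m => lam ⟨m % (n+1), Nat.mod_lt _ (Nat.succ_pos n)⟩ with hLam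
  set eN : ℕ → ℝ := fun v => (if qsN n q v ≤ s-1 then (1:ℝ) else 0)
      - (if n-s < qsN n q v then (1:ℝ) else 0) with heN
  have hfin : ∀ v : Fin (n+1), (⟨(v:ℕ) % (n+1), Nat.mod_lt _ (Nat.succ_pos n)⟩ : Fin (n+1)) = v :=
    fun v => Fin.ext (Nat.mod_eq_of_lt v.isLt)
  have hsn : s ≤ n := by omega
  -- A1
  have hA1 : ∑ v ∈ range (n+1), (if qsN n q v ≤ s-1 then Lam v else 0)
      = ∑ j ∈ range s, Lq j := by
    rw [← Fin.sum_univ_eq_sum_range (fun v => if qsN n q v ≤ s-1 then Lam v else 0) (n+1)]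
    have e1 : ∀ v : Fin (n+1), (if qsN n q (v:ℕ) ≤ s-1 then Lam (v:ℕ) else 0)
        = (fun w => if ((q.symm w : Fin (n+1)) : ℕ) ≤ s-1 then lam w else 0) v := by
      intro v
      simp only [hLam, qsN_def]
      rw [hfin v]
    rw [Finset.sum_congr rfl (fun v _ => e1 v)]
    rw [← Equiv.sum_comp q (fun w => if ((q.symm w : Fin (n+1)) : ℕ) ≤ s-1 then lam w else 0)]
    have e2 : ∀ i : Fin (n+1),
        (if ((q.symm (q i) : Fin (n+1)) : ℕ) ≤ s-1 then lam (q i) else 0)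
          = (fun j => if j ≤ s-1 then Lq j else 0) (i:ℕ) := by
      intro i
      simp only [hLq, Equiv.symm_apply_apply]
      rw [hfin i]
    rw [Finset.sum_congr rfl (fun i _ => e2 i)]
    rw [Fin.sum_univ_eq_sum_range (fun j => if j ≤ s-1 then Lq j else 0) (n+1)]
    rw [← Finset.sum_filter]
    congr 1
    ext a
    simp only [mem_filter, mem_range]
    omega
  -- A2
  have hA2 : ∑ v ∈ range (n+1), (if n-s < qsN n q v then Lam v else 0)
      = ∑ j ∈ range s, Lq (n - j) := by
    rw [← Fin.sum_univ_eq_sum_range (fun v => if n-s < qsN n q v then Lam v else 0) (n+1)]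
    have e1 : ∀ v : Fin (n+1), (if n-s < qsN n q (v:ℕ) then Lam (v:ℕ) else 0)
        = (fun w => if n-s < ((q.symm w : Fin (n+1)) : ℕ) then lam w else 0) v := by
      intro v
      simp only [hLam, qsN_def]
      rw [hfin v]
    rw [Finset.sum_congr rfl (fun v _ => e1 v)]
    rw [← Equiv.sum_comp q (fun w => if n-s < ((q.symm w : Fin (n+1)) : ℕ) then lam w else 0)]
    have e2 : ∀ i : Fin (n+1),
        (if n-s < ((q.symm (q i) : Fin (n+1)) : ℕ) then lam (q i) else 0)
          = (fun j => if n-s < j then Lq j else 0) (i:ℕ) := by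
      intro i
      simp only [hLq, Equiv.symm_apply_apply]
      rw [hfin i]
    rw [Finset.sum_congr rfl (fun i _ => e2 i)]
    rw [Fin.sum_univ_eq_sum_range (fun j => if n-s < j then Lq j else 0) (n+1)]
    rw [← Finset.sum_filter]
    have hfil : filter (fun j => n-s < j) (range (n+1)) = Finset.Ico (n-s+1) (n+1) := by
      ext a
      simp only [mem_filter, mem_range, Finset.mem_Ico]
      omega
    rw [hfil]
    rw [Finset.sum_Ico_eq_sum_range]
    have hsz : n + 1 - (n-s+1) = s := by omega
    rw [hsz]
    rw [← Finset.sum_range_reflect (fun k => Lq (n-s+1+k)) s]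
    apply Finset.sum_congr rfl
    intro k hk
    rw [mem_range] at hk
    congr 1
    omega
  -- value-side form
  have hE : ∑ j ∈ range s, (Lq j - Lq (n-j))
      = ∑ v ∈ range (n+1), Lam v * eN v := by
    rw [Finset.sum_sub_distrib, ← hA1, ← hA2, ← Finset.sum_sub_distrib]
    apply Finset.sum_congr rfl
    intro v _
    simp only [heN]
    split_ifs <;> ring
  -- partial sums of eN
  have heNsum : ∀ T : ℕ, ∑ j ∈ range T, eN j
      = ((Gc n q T (s-1) : ℕ) : ℝ) + ((Gc n q T (n-s) : ℕ) : ℝ) - (T : ℝ) := by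
    intro T
    simp only [heN]
    rw [Finset.sum_sub_distrib, Finset.sum_boole, Finset.sum_boole]
    have h1 : filter (fun x => n-s < qsN n q x) (range T)
        = filter (fun v => ¬ qsN n q v ≤ n-s) (range T) := by
      apply Finset.filter_congr
      intro x _
      constructor
      · intro hh; omega
      · intro hh; omega
    rw [h1]
    have h2 := Finset.card_filter_add_card_filter_not
      (s := range T) (p := fun v => qsN n q v ≤ n-s)
    rw [Finset.card_range] at h2
    have h3 : ((filter (fun v => ¬ qsN n q v ≤ n-s) (range T)).card : ℝ)
        = (T : ℝ) - ((Gc n q T (n-s) : ℕ) : ℝ) := by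
      have h4 : (filter (fun v => ¬ qsN n q v ≤ n-s) (range T)).card
          + Gc n q T (n-s) = T := by
        unfold Gc
        omega
      have := congrArg (fun z : ℕ => (z : ℝ)) h4
      push_cast at this
      linarith
    rw [h3]
    show ((Gc n q T (s-1) : ℕ) : ℝ) - _ = _
    ring
  -- total is zero
  have htot : ∑ j ∈ range (n+1), eN j = 0 := by
    rw [heNsum (n+1), Gc2.Gc_full n q (s-1) (by omega), Gc2.Gc_full n q (n-s) (by omega)]
    have e : (s - 1 + 1) + (n - s + 1) = n + 1 := by omega
    have e2 : ((s - 1 + 1 : ℕ) : ℝ) + ((n - s + 1 : ℕ) : ℝ) = ((n + 1 : ℕ) : ℝ) := by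
      exact_mod_cast congrArg (fun z : ℕ => (z : ℝ)) e
    push_cast at e2 ⊢
    linarith
  -- Abel
  have hparts := Finset.sum_range_by_parts Lam eN (n+1)
  simp only [smul_eq_mul] at hparts
  rw [hE, hparts]
  have en : n + 1 - 1 = n := by omega
  rw [en, htot, mul_zero]
  have hterm : ∀ i ∈ range n, (Lam (i+1) - Lam i) * (∑ j ∈ range (i+1), eN j) ≤ 0 := by
    intro i hi
    rw [mem_range] at hi
    have hmono : Lam (i+1) ≤ Lam i := by
      have e1 : i % (n+1) = i := Nat.mod_eq_of_lt (by omega)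
      have e2 : (i+1) % (n+1) = i+1 := Nat.mod_eq_of_lt (by omega)
      have hle : (⟨i % (n+1), Nat.mod_lt _ (Nat.succ_pos n)⟩ : Fin (n+1))
          ≤ ⟨(i+1) % (n+1), Nat.mod_lt _ (Nat.succ_pos n)⟩ := by
        rw [Fin.mk_le_mk, e1, e2]
        omega
      exact hlam _ _ hle
    have hnn : 0 ≤ ∑ j ∈ range (i+1), eN j := by
      rw [heNsum (i+1)]
      have hd := hD s (i+1) hs1 hs2 (by omega) (by omega)
      have hd' : ((i+1 : ℕ) : ℝ) ≤ ((Gc n q (i+1) (s-1) : ℕ) : ℝ)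
          + ((Gc n q (i+1) (n-s) : ℕ) : ℝ) := by exact_mod_cast hd
      push_cast at hd' ⊢
      linarith
    nlinarith
  have hsum := Finset.sum_nonpos hterm
  linarith

lemma inner_nonneg (lam h : EuclideanSpace ℝ (Fin (n+1)))
    (hlam : ∀ i j : Fin (n+1), i ≤ j → lam j ≤ lam i)
    (hh : ∀ i j : Fin (n+1), i ≤ j → h j ≤ h i)
    (hsym : ∀ i : Fin (n+1), h i = - h ⟨n - (i : ℕ), Nat.lt_succ_of_le (Nat.sub_le _ _)⟩)
    (hD : ∀ s t : ℕ, 1 ≤ s → 2*s ≤ n+1 → 1 ≤ t → t ≤ n →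
      t ≤ Gc n q t (s-1) + Gc n q t (n-s))
    (hn : 1 ≤ n) :
    0 ≤ ∑ i : Fin (n+1), lam (q i) * h i := by
  set P := (n+1)/2 with hP
  have hP1 : 1 ≤ P := by omega
  have hPn : P ≤ n := by omega
  have hP2 : 2*P ≤ n+1 := by omega
  set Lq : ℕ → ℝ := fun m => lam (q ⟨m % (n+1), Nat.mod_lt _ (Nat.succ_pos n)⟩) with hLq
  set Hh : ℕ → ℝ := fun m => h ⟨m % (n+1), Nat.mod_lt _ (Nat.succ_pos n)⟩ with hHh
  have hfin : ∀ v : Fin (n+1), (⟨(v:ℕ) % (n+1), Nat.mod_lt _ (Nat.succ_pos n)⟩ : Fin (n+1)) = v :=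
    fun v => Fin.ext (Nat.mod_eq_of_lt v.isLt)
  have hfin' : ∀ m : ℕ, (hm : m ≤ n) → (⟨m % (n+1), Nat.mod_lt _ (Nat.succ_pos n)⟩ : Fin (n+1))
      = ⟨m, by omega⟩ := fun m hm => Fin.ext (Nat.mod_eq_of_lt (by omega))
  have hsym' : ∀ m : ℕ, m ≤ n → Hh (n - m) = - Hh m := by
    intro m hm
    have h1 := hsym ⟨m, by omega⟩
    simp only [hHh]
    rw [hfin' m hm, hfin' (n-m) (Nat.sub_le n m)]
    rw [h1, neg_neg]
  have step1 : ∑ i : Fin (n+1), lam (q i) * h i = ∑ i ∈ range (n+1), Lq i * Hh i := by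
    rw [← Fin.sum_univ_eq_sum_range (fun m => Lq m * Hh m) (n+1)]
    apply Finset.sum_congr rfl
    intro i _
    simp only [hLq, hHh]
    rw [hfin i]
  have hIco : ∑ i ∈ Finset.Ico P (n+1), (Lq i * Hh i)
      = ∑ k ∈ range (n+1-P), (Lq (n-k) * Hh (n-k)) := by
    rw [Finset.sum_Ico_eq_sum_range]
    rw [← Finset.sum_range_reflect (fun k => Lq (P+k) * Hh (P+k)) (n+1-P)]
    apply Finset.sum_congr rfl
    intro k hk
    rw [mem_range] at hk
    have e : P + (n+1-P-1-k) = n - k := by omega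
    rw [e]
  have hsplit : ∑ i ∈ range (n+1), (Lq i * Hh i)
      = (∑ i ∈ range P, Lq i * Hh i) + ∑ i ∈ Finset.Ico P (n+1), (Lq i * Hh i) :=
    (Finset.sum_range_add_sum_Ico _ (by omega)).symm
  have hpair : ∑ i : Fin (n+1), lam (q i) * h i
      = ∑ i ∈ range P, (Lq i * Hh i + Lq (n-i) * Hh (n-i)) := by
    rw [step1, hsplit, hIco]
    have hm : n + 1 - P = P ∨ (n + 1 - P = P + 1 ∧ n - P = P) := by omega
    rcases hm with hm | ⟨hm, hmid⟩
    · rw [hm, ← Finset.sum_add_distrib]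
    · rw [hm, Finset.sum_range_succ]
      have hz : Hh (n - P) = 0 := by
        have := hsym' P (by omega)
        rw [hmid] at this ⊢
        linarith
      rw [hz, mul_zero, add_zero, ← Finset.sum_add_distrib]
  rw [hpair]
  have hpt : ∀ i ∈ range P, Lq i * Hh i + Lq (n-i) * Hh (n-i)
      = Hh i * (Lq i - Lq (n-i)) := by
    intro i hi
    rw [mem_range] at hi
    rw [hsym' i (by omega)]
    ring
  rw [Finset.sum_congr rfl hpt]
  have hparts := Finset.sum_range_by_parts Hh (fun i => Lq i - Lq (n-i)) P
  simp only [smul_eq_mul] at hparts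
  rw [hparts]
  have hHlast : 0 ≤ Hh (P-1) := by
    have h1 := hsym' (P-1) (by omega)
    have h2 : Hh (n - (P-1)) ≤ Hh (P-1) := by
      simp only [hHh]
      apply hh
      rw [Fin.mk_le_mk]
      have e1 : (P-1) % (n+1) = P-1 := Nat.mod_eq_of_lt (by omega)
      have e2 : (n-(P-1)) % (n+1) = n-(P-1) := Nat.mod_eq_of_lt (by omega)
      rw [e1, e2]
      omega
    linarith
  have hE : ∀ s, 1 ≤ s → s ≤ P → 0 ≤ ∑ j ∈ range s, (Lq j - Lq (n-j)) := by
    intro s h1 h2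
    exact E_nonneg n q lam hlam hD hn s h1 (by omega)
  have hterm : ∀ i ∈ range (P-1),
      (Hh (i+1) - Hh i) * (∑ j ∈ range (i+1), (Lq j - Lq (n-j))) ≤ 0 := by
    intro i hi
    rw [mem_range] at hi
    have hmono : Hh (i+1) ≤ Hh i := by
      simp only [hHh]
      apply hh
      rw [Fin.mk_le_mk]
      have e1 : i % (n+1) = i := Nat.mod_eq_of_lt (by omega)
      have e2 : (i+1) % (n+1) = i+1 := Nat.mod_eq_of_lt (by omega)
      rw [e1, e2]
      omega
    have hnn := hE (i+1) (by omega) (by omega)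
    nlinarith
  have hsum := Finset.sum_nonpos hterm
  have hEP := hE P (by omega) (le_refl P)
  nlinarith

end RealSide

lemma inner_expand (n : ℕ) (x y : EuclideanSpace ℝ (Fin (n+1))) :
    ⟪x, y⟫ = ∑ i : Fin (n+1), x i * y i := by
  rw [PiLp.inner_apply]
  simp [RCLike.inner_apply, conj_trivial]
  exact Finset.sum_congr rfl (fun _ _ => mul_comm _ _)

lemma sum_indic (N c : ℕ) : (∑ m ∈ range N, if m < c then (1:ℝ) else 0) = ((min c N : ℕ) : ℝ) := by
  rw [Finset.sum_boole]
  congr 1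
  have : filter (fun m => m < c) (range N) = range (min c N) := by
    ext a
    simp only [mem_filter, mem_range, Nat.lt_min]
    tauto
  rw [this, Finset.card_range]

lemma wt_inner_pos (n j kk : ℕ) (hj1 : 1 ≤ j) (hj2 : j ≤ n) (hk1 : 1 ≤ kk) (hk2 : kk ≤ n) :
    0 < ⟪wtA n kk, wtA n j⟫ := by
  rw [inner_expand]
  have hstep : ∑ i : Fin (n+1), wtA n kk i * wtA n j i
      = ∑ m ∈ range (n+1), ((if m < kk then (1:ℝ) else 0) - (kk:ℝ)/((n:ℝ)+1))
          * ((if m < j then (1:ℝ) else 0) - (j:ℝ)/((n:ℝ)+1)) := by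
    rw [← Fin.sum_univ_eq_sum_range (fun m => ((if m < kk then (1:ℝ) else 0) - (kk:ℝ)/((n:ℝ)+1))
          * ((if m < j then (1:ℝ) else 0) - (j:ℝ)/((n:ℝ)+1))) (n+1)]
    rfl
  rw [hstep]
  set c1 : ℝ := (kk:ℝ)/((n:ℝ)+1) with hc1
  set c2 : ℝ := (j:ℝ)/((n:ℝ)+1) with hc2
  have hpt : ∀ m ∈ range (n+1),
      ((if m < kk then (1:ℝ) else 0) - c1) * ((if m < j then (1:ℝ) else 0) - c2)
        = (if m < min kk j then (1:ℝ) else 0)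
          - c2 * (if m < kk then (1:ℝ) else 0) - c1 * (if m < j then (1:ℝ) else 0) + c1*c2 := by
    intro m _
    by_cases h1 : m < kk <;> by_cases h2 : m < j
    · rw [if_pos h1, if_pos h2, if_pos (by omega : m < min kk j)]; ring
    · rw [if_pos h1, if_neg h2, if_neg (by omega : ¬ m < min kk j)]; ring
    · rw [if_neg h1, if_pos h2, if_neg (by omega : ¬ m < min kk j)]; ring
    · rw [if_neg h1, if_neg h2, if_neg (by omega : ¬ m < min kk j)]; ring
  rw [Finset.sum_congr rfl hpt]
  have e1 := sum_indic (n+1) (min kk j)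
  have e2 := sum_indic (n+1) kk
  have e3 := sum_indic (n+1) j
  rw [Finset.sum_add_distrib, Finset.sum_sub_distrib, Finset.sum_sub_distrib]
  rw [← Finset.mul_sum, ← Finset.mul_sum, e1, e2, e3, Finset.sum_const, Finset.card_range]
  have hminn : min (min kk j) (n+1) = min kk j := by omega
  have hkn : min kk (n+1) = kk := by omega
  have hjn : min j (n+1) = j := by omega
  rw [hminn, hkn, hjn]
  have hN : (0:ℝ) < (n:ℝ) + 1 := by positivity
  have hc1e : c1 * ((n:ℝ)+1) = kk := by
    rw [hc1]; field_simp
  have hc2e : c2 * ((n:ℝ)+1) = j := by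
    rw [hc2]; field_simp
  have hsmul : (n+1) • (c1 * c2) = ((n:ℝ)+1) * (c1 * c2) := by
    rw [nsmul_eq_mul]; push_cast; ring
  rw [hsmul]
  -- now : min kk j - c2 * kk - c1 * j + (n+1)*(c1*c2) > 0
  have hmm : ((min kk j : ℕ) : ℝ) * ((n:ℝ)+1) > (kk:ℝ) * (j:ℝ) := by
    rcases le_total kk j with hc | hc
    · rw [min_eq_left hc]
      have hj' : (j:ℝ) < (n:ℝ)+1 := by exact_mod_cast (by omega : j < n+1)
      have hkpos : (0:ℝ) < kk := by exact_mod_cast hk1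
      nlinarith
    · rw [min_eq_right hc]
      have hk' : (kk:ℝ) < (n:ℝ)+1 := by exact_mod_cast (by omega : kk < n+1)
      have hjpos : (0:ℝ) < j := by exact_mod_cast hj1
      nlinarith
  have hexp : c2 * (kk:ℝ) + c1 * (j:ℝ) - ((n:ℝ)+1)*(c1*c2) = (kk:ℝ)*(j:ℝ)/((n:ℝ)+1) := by
    rw [hc1, hc2]; field_simp; ring
  have : (kk:ℝ)*(j:ℝ)/((n:ℝ)+1) < ((min kk j : ℕ) : ℝ) := by
    rw [div_lt_iff₀ hN]
    linarith
  linarith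

lemma wtA_mk (n t a : ℕ) (h : a < n+1) :
    wtA n t ⟨a, h⟩ = (if a < t then (1:ℝ) else 0) - (t:ℝ)/((n:ℝ)+1) := rfl

lemma compA1_eval (n : ℕ) (hn : 1 ≤ n) (i : Fin (n+1)) :
    compA n [1] (wtA n 1) i
      = (if (i:ℕ) = 1 then (1:ℝ) else 0) - ((1:ℕ):ℝ)/((n:ℝ)+1) := by
  have e1 : (1:ℕ) % (n+1) = 1 := Nat.mod_eq_of_lt (by omega)
  have ei : (i:ℕ) % (n+1) = (i:ℕ) := Nat.mod_eq_of_lt i.isLt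
  show wtA n 1 ⟨(if (i:ℕ) + 1 = 1 then 1 else if (i:ℕ) = 1 then 1 - 1 else (i:ℕ)) % (n + 1),
      Nat.mod_lt _ (Nat.succ_pos n)⟩ = _
  rw [wtA_mk]
  by_cases h1 : (i:ℕ) + 1 = 1
  · rw [if_pos h1]
    simp only [e1]
    rw [if_neg (by norm_num : ¬ (1:ℕ) < 1), if_neg (by omega : ¬ (i:ℕ) = 1)]
  · rw [if_neg h1]
    by_cases h2 : (i:ℕ) = 1
    · rw [if_pos h2, show (1:ℕ) - 1 = 0 from rfl]
      simp only [Nat.zero_mod]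
      simp [h2]
    · rw [if_neg h2]
      simp only [ei]
      rw [if_neg (by omega : ¬ (i:ℕ) < 1), if_neg h2]

lemma s1_inner_neg (n : ℕ) (hn : 1 ≤ n) : ⟪compA n [1] (wtA n 1), wtA n 1⟫ < 0 := by
  rw [inner_expand]
  set c : ℝ := ((1:ℕ):ℝ)/((n:ℝ)+1) with hc
  have hpt : ∀ i : Fin (n+1), compA n [1] (wtA n 1) i * wtA n 1 i
      = (fun m => ((if m = 1 then (1:ℝ) else 0) - c) * ((if m < 1 then (1:ℝ) else 0) - c)) (i:ℕ) := by
    intro i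
    rw [compA1_eval n hn i]
    rfl
  rw [Finset.sum_congr rfl (fun i _ => hpt i)]
  rw [Fin.sum_univ_eq_sum_range (fun m => ((if m = 1 then (1:ℝ) else 0) - c)
    * ((if m < 1 then (1:ℝ) else 0) - c)) (n+1)]
  have hpt2 : ∀ m ∈ range (n+1), ((if m = 1 then (1:ℝ) else 0) - c) * ((if m < 1 then (1:ℝ) else 0) - c)
      = (c*c - c * (if m = 1 then (1:ℝ) else 0)) - c * (if m < 1 then (1:ℝ) else 0) := by
    intro m _
    by_cases h1 : m = 1 <;> by_cases h2 : m < 1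
    · omega
    · rw [if_pos h1, if_neg h2]; ring
    · rw [if_neg h1, if_pos h2]; ring
    · rw [if_neg h1, if_neg h2]; ring
  rw [Finset.sum_congr rfl hpt2]
  have hs1 : (∑ m ∈ range (n+1), if m = 1 then (1:ℝ) else 0) = 1 := by
    rw [Finset.sum_ite_eq' (range (n+1)) 1 (fun _ => (1:ℝ))]
    rw [if_pos (Finset.mem_range.mpr (by omega))]
  have hs2 : (∑ m ∈ range (n+1), if m < 1 then (1:ℝ) else 0) = 1 := by
    have := sum_indic (n+1) 1
    rw [this]
    norm_num
  have hA : (∑ m ∈ range (n+1), c * (if m = 1 then (1:ℝ) else 0)) = c := by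
    rw [← Finset.mul_sum, hs1, mul_one]
  have hB : (∑ m ∈ range (n+1), c * (if m < 1 then (1:ℝ) else 0)) = c := by
    rw [← Finset.mul_sum, hs2, mul_one]
  rw [Finset.sum_sub_distrib, Finset.sum_sub_distrib, hA, hB, Finset.sum_const, Finset.card_range]
  have hN : (0:ℝ) < (n:ℝ)+1 := by positivity
  have hcval : ((n:ℝ)+1) * c = 1 := by
    rw [hc]; push_cast; field_simp
  have hcpos : 0 < c := by rw [hc]; positivity
  have hkey : (n+1) • (c*c) = c := by
    rw [nsmul_eq_mul]
    push_cast
    calc ((n:ℝ)+1) * (c*c) = (((n:ℝ)+1) * c) * c := by ring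
      _ = c := by rw [hcval]; ring
  rw [hkey]
  linarith

-- part (b) membership data
noncomputable def hvec (n : ℕ) : EuclideanSpace ℝ (Fin (n+1)) :=
  WithLp.toLp 2 fun i => if 2*(i:ℕ) < n then (1:ℝ) else if n < 2*(i:ℕ) then -1 else 0

noncomputable def lamvec (n : ℕ) : EuclideanSpace ℝ (Fin (n+1)) :=
  WithLp.toLp 2 fun i => if (i:ℕ) = 0 then (1:ℝ) else 0

def lmov (r : ℕ) : List ℕ := (List.range r).reverse.map (· + 1)

lemma lmov_len (r : ℕ) : (lmov r).length = r := by simp [lmov]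

lemma lmov_mem (r m : ℕ) (hm : m ∈ lmov r) : 1 ≤ m ∧ m ≤ r := by
  simp only [lmov, List.mem_map, List.mem_reverse, List.mem_range] at hm
  obtain ⟨a, ha, rfl⟩ := hm
  omega

lemma lmov_succ (r : ℕ) : lmov (r+1) = (r+1) :: lmov r := by
  simp [lmov, List.range_succ]

lemma compA_lmov (n : ℕ) : ∀ r, r ≤ n → ∀ i : Fin (n+1),
    compA n (lmov r) (lamvec n) i = (if (i:ℕ) = r then (1:ℝ) else 0) := by
  intro r
  induction r with
  | zero => intro _ i; rfl
  | succ r ih =>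
    intro hr i
    rw [lmov_succ]
    show sA n (r+1) (compA n (lmov r) (lamvec n)) i = _
    show compA n (lmov r) (lamvec n)
      ⟨(if (i:ℕ) + 1 = r+1 then r+1 else if (i:ℕ) = r+1 then r+1-1 else (i:ℕ)) % (n+1),
        Nat.mod_lt _ (Nat.succ_pos n)⟩ = _
    rw [ih (by omega)]
    have er1 : (r+1) % (n+1) = r+1 := Nat.mod_eq_of_lt (by omega)
    have er : r % (n+1) = r := Nat.mod_eq_of_lt (by omega)
    have ei : (i:ℕ) % (n+1) = (i:ℕ) := Nat.mod_eq_of_lt i.isLt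
    by_cases h1 : (i:ℕ) + 1 = r + 1
    · rw [if_pos h1]
      show (if (r+1) % (n+1) = r then (1:ℝ) else 0) = _
      rw [er1, if_neg (by omega), if_neg (by omega : ¬ (i:ℕ) = r+1)]
    · rw [if_neg h1]
      by_cases h2 : (i:ℕ) = r+1
      · rw [if_pos h2]
        show (if (r+1-1) % (n+1) = r then (1:ℝ) else 0) = _
        rw [show r+1-1 = r from rfl, er, if_pos rfl, if_pos h2]
      · rw [if_neg h2]
        show (if (i:ℕ) % (n+1) = r then (1:ℝ) else 0) = _
        rw [ei, if_neg (by omega), if_neg h2]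

lemma hvec_ne (n : ℕ) (hn : 1 ≤ n) : hvec n ≠ 0 := by
  intro h0
  have h1 : hvec n ⟨0, Nat.succ_pos n⟩ = 1 := by
    unfold hvec
    simp only [PiLp.toLp_apply]
    simp [show 0 < n by omega]
  rw [h0] at h1
  have h2 : (0 : EuclideanSpace ℝ (Fin (n+1))) ⟨0, Nat.succ_pos n⟩ = 0 := rfl
  rw [h2] at h1
  exact zero_ne_one h1

lemma hvec_mono (n : ℕ) : ∀ i j : Fin (n+1), i ≤ j → hvec n j ≤ hvec n i := by
  intro i j hij
  have hij' : (i:ℕ) ≤ (j:ℕ) := hij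
  unfold hvec
  simp only [PiLp.toLp_apply]
  split_ifs <;> try norm_num
  all_goals omega

lemma hvec_sym (n : ℕ) : ∀ i : Fin (n+1), hvec n i = - hvec n ⟨n - (i:ℕ), Nat.lt_succ_of_le (Nat.sub_le _ _)⟩ := by
  intro i
  have hi : (i:ℕ) ≤ n := by omega
  unfold hvec
  have e : ((⟨n - (i:ℕ), Nat.lt_succ_of_le (Nat.sub_le _ _)⟩ : Fin (n+1)) : ℕ) = n - (i:ℕ) := rfl
  simp only [PiLp.toLp_apply, e]
  split_ifs <;> try norm_num
  all_goals omega

lemma lamvec_mono (n : ℕ) : ∀ i j : Fin (n+1), i ≤ j → lamvec n j ≤ lamvec n i := by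
  intro i j hij
  have hij' : (i:ℕ) ≤ (j:ℕ) := hij
  unfold lamvec
  simp only [PiLp.toLp_apply]
  split_ifs <;> try norm_num
  all_goals omega

lemma lamvec_lt (n : ℕ) (hn : 1 ≤ n) :
    lamvec n ⟨n, Nat.lt_succ_self n⟩ < lamvec n ⟨0, Nat.succ_pos n⟩ := by
  unfold lamvec
  simp only [PiLp.toLp_apply]
  simp [show n ≠ 0 by omega]

lemma b_inner_neg (n : ℕ) (hn : 1 ≤ n) :
    ⟪compA n (lmov ((n+2)/2)) (lamvec n), hvec n⟫ < 0 := by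
  set m0 := (n+2)/2 with hm0
  have hm0n : m0 ≤ n := by omega
  rw [inner_expand]
  have hpt : ∀ i : Fin (n+1), compA n (lmov m0) (lamvec n) i * hvec n i
      = (if (i:ℕ) = m0 then (1:ℝ) else 0) * hvec n i := by
    intro i
    rw [compA_lmov n m0 hm0n i]
  rw [Finset.sum_congr rfl (fun i _ => hpt i)]
  rw [Fintype.sum_eq_single (⟨m0, by omega⟩ : Fin (n+1))]
  · have e : ((⟨m0, by omega⟩ : Fin (n+1)) : ℕ) = m0 := rfl
    rw [if_pos e, one_mul]
    unfold hvec
    simp only [PiLp.toLp_apply, e]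
    rw [if_neg (by omega), if_pos (by omega)]
    norm_num
  · intro b hb
    rw [if_neg, zero_mul]
    intro hbm
    exact hb (Fin.ext hbm)

theorem statement6 (n : ℕ) (hn : 1 ≤ n) :
    (IsLeast {k : ℕ | ∃ j kk, 1 ≤ j ∧ j ≤ n ∧ 1 ≤ kk ∧ kk ≤ n ∧
        ∃ l : List ℕ, (∀ m ∈ l, 1 ≤ m ∧ m ≤ n) ∧ l.length = k ∧
          ⟪compA n l (wtA n kk), wtA n j⟫ < 0} 1 ∧
      ⟪compA n [1] (wtA n 1), wtA n 1⟫ < 0) ∧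
    IsLeast {k : ℕ | ∃ h lam : EuclideanSpace ℝ (Fin (n + 1)),
        h ≠ 0 ∧ (∀ i j : Fin (n + 1), i ≤ j → h j ≤ h i) ∧
        (∀ i : Fin (n + 1), h i = - h ⟨n - (i : ℕ), by omega⟩) ∧
        (∀ i j : Fin (n + 1), i ≤ j → lam j ≤ lam i) ∧
        lam ⟨n, by omega⟩ < lam ⟨0, by omega⟩ ∧
        ∃ l : List ℕ, (∀ m ∈ l, 1 ≤ m ∧ m ≤ n) ∧ l.length = k ∧
          ⟪compA n l lam, h⟫ < 0} ((n + 2) / 2) := by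
  refine ⟨⟨⟨?_, ?_⟩, s1_inner_neg n hn⟩, ⟨?_, ?_⟩⟩
  · -- membership 1
    refine ⟨1, 1, le_refl 1, hn, le_refl 1, hn, [1], ?_, rfl, s1_inner_neg n hn⟩
    intro m hm
    rw [List.mem_singleton] at hm
    subst hm
    exact ⟨le_refl 1, hn⟩
  · -- lower bound 1
    intro k hk
    obtain ⟨j, kk, hj1, hj2, hk1, hk2, l, hl, hlen, hneg⟩ := hk
    by_contra hk0
    push_neg at hk0
    have hl0 : l = [] := List.length_eq_zero_iff.mp (by omega)
    subst hl0
    have he : compA n [] (wtA n kk) = wtA n kk := rfl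
    rw [he] at hneg
    exact absurd hneg (not_lt.mpr (le_of_lt (wt_inner_pos n j kk hj1 hj2 hk1 hk2)))
  · -- membership (n+2)/2
    refine ⟨hvec n, lamvec n, hvec_ne n hn, hvec_mono n, hvec_sym n, lamvec_mono n,
      lamvec_lt n hn, lmov ((n+2)/2), ?_, lmov_len _, b_inner_neg n hn⟩
    intro m hm
    have := lmov_mem _ m hm
    omega
  · -- lower bound (n+2)/2
    intro k hk
    obtain ⟨h, lam, hne, hmono, hsym, lammono, lamlt, l, hl, hlen, hneg⟩ := hk
    by_contra hlt
    push_neg at hlt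
    have h2k : 2 * l.length ≤ n := by omega
    have hD : ∀ s t : ℕ, 1 ≤ s → 2*s ≤ n+1 → 1 ≤ t → t ≤ n →
        t ≤ Gc n (permE n l) t (s-1) + Gc n (permE n l) t (n-s) :=
      fun s t hs1 hs2 ht1 htn => Gc2.key_count n l hl h2k s t hs1 hs2 ht1 htn
    have hnn := inner_nonneg n (permE n l) lam h lammono hmono hsym hD hn
    have hexp : ⟪compA n l lam, h⟫ = ∑ i : Fin (n+1), lam (permE n l i) * h i := by
      rw [inner_expand]
      exact Finset.sum_congr rfl (fun i _ => by rw [compA_eq n l hl lam i])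
    rw [hexp] at hneg
    linarith
end
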